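/- arXiv:0801.2957 — 4 statements merged into one kernel-verified Lean document; each statement's English description precedes it below -/
import Mathlib

section
/- For every integer d ≥ 1 there exists a constant C, depending only on d, such that the following holds. Let m : ℝ → ℂ be a (d+2)-times continuously differentiable function supported in [-2,-1/2] ∪ [1/2,2] and satisfying |m^{(α)}(λ)| ≤ 1 for all integers 0 ≤ α ≤ d+2 and all λ ∈ ℝ. Then for all real numbers A and B: (i) if B ≠ 0 and 1/10 ≤ |A/B| ≤ 10, then |∫_ℝ e^{i(Aλ² + Bλ)} m(λ) dλ| ≤ C (1+|A|)^{-1/2}; (ii) if |A| < |B|/10 or |A| > 10|B|, then |∫_ℝ e^{i(Aλ² + Bλ)} m(λ) dλ| ≤ C (1+|A|+|B|)^{-d}. -/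
open MeasureTheory Set Complex intervalIntegral

noncomputable def oscE (A B : ℝ) (x : ℝ) : ℂ :=
  Complex.exp (Complex.I * ((A : ℂ) * (x : ℂ) ^ 2 + (B : ℂ) * (x : ℂ)))

noncomputable def oscP (A B : ℝ) (x : ℝ) : ℂ := Complex.I * ((2*A*x + B : ℝ) : ℂ)

lemma oscE_eq (A B x : ℝ) : oscE A B x = Complex.exp (((A*x^2 + B*x : ℝ) : ℂ) * Complex.I) := by
  unfold oscE; push_cast; ring_nf

lemma oscE_norm (A B x : ℝ) : ‖oscE A B x‖ = 1 := by
  rw [oscE_eq]; exact Complex.norm_exp_ofReal_mul_I _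

lemma oscE_continuous (A B : ℝ) : Continuous (oscE A B) := by
  unfold oscE; fun_prop

lemma oscP_continuous (A B : ℝ) : Continuous (oscP A B) := by
  unfold oscP; fun_prop

lemma oscE_hasDerivAt (A B x : ℝ) :
    HasDerivAt (oscE A B) (oscP A B x * oscE A B x) x := by
  have h0 : HasDerivAt (fun y : ℝ => (y : ℂ)) 1 x := by
    exact Complex.ofRealCLM.hasDerivAt (x := x)
  have h1 : HasDerivAt (fun y : ℝ => Complex.I * ((A:ℂ)*(y:ℂ)^2 + (B:ℂ)*(y:ℂ)))
      (Complex.I * ((A:ℂ)*(2*(x:ℂ)) + (B:ℂ))) x := by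
    have ha : HasDerivAt (fun y : ℝ => (A:ℂ)*(y:ℂ)^2) ((A:ℂ)*(2*(x:ℂ))) x := by
      have := (h0.mul h0).const_mul (A:ℂ)
      simp only [pow_two]
      exact this.congr_deriv (by ring)
    have hb : HasDerivAt (fun y : ℝ => (B:ℂ)*(y:ℂ)) ((B:ℂ)*1) x := h0.const_mul (B:ℂ)
    have := (ha.add hb).const_mul Complex.I
    exact this.congr_deriv (by ring)
  have := h1.cexp
  refine this.congr_deriv ?_
  unfold oscP oscE
  push_cast
  ring

lemma osc_ibp (A B a b : ℝ) (u u' : ℝ → ℂ)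
    (hu : ∀ x ∈ Set.uIcc a b, HasDerivAt u (u' x) x)
    (hu' : ContinuousOn u' (Set.uIcc a b)) :
    ∫ x in a..b, (oscE A B x * (oscP A B x * u x) + oscE A B x * u' x)
      = oscE A B b * u b - oscE A B a * u a := by
  have hcu : ContinuousOn u (Set.uIcc a b) := fun x hx => ((hu x hx).continuousAt).continuousWithinAt
  apply intervalIntegral.integral_eq_sub_of_hasDerivAt (f := fun x => oscE A B x * u x)
  · intro x hx
    have := (oscE_hasDerivAt A B x).mul (hu x hx)
    exact this.congr_deriv (by ring)
  · apply ContinuousOn.intervalIntegrable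
    apply ContinuousOn.add
    · exact (((oscE_continuous A B).continuousOn).mul ((oscP_continuous A B).continuousOn)).mul hcu |>.congr (fun x hx => by simp only [Pi.mul_apply]; ring)
    · exact ((oscE_continuous A B).continuousOn).mul hu'

def oscS : Set ℝ := Set.Icc (-2 : ℝ) (-1/2) ∪ Set.Icc (1/2 : ℝ) 2

lemma oscS_open_compl : IsOpen oscSᶜ :=
  (IsClosed.union isClosed_Icc isClosed_Icc).isOpen_compl

lemma iteratedDeriv_zero_outside {m : ℝ → ℂ} (hsupp : Function.support m ⊆ oscS)
    (j : ℕ) : ∀ x ∉ oscS, iteratedDeriv j m x = 0 := by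
  induction j with
  | zero =>
    intro x hx
    rw [iteratedDeriv_zero]
    exact Function.support_subset_iff'.mp hsupp x hx
  | succ j ih =>
    intro x hx
    rw [iteratedDeriv_succ]
    have hev : iteratedDeriv j m =ᶠ[nhds x] (fun _ => (0:ℂ)) :=
      Filter.eventually_of_mem (oscS_open_compl.mem_nhds hx) ih
    rw [hev.deriv_eq]
    simp

lemma closure_compl_oscS :
    Set.Iic (-2:ℝ) ∪ Set.Icc (-1/2:ℝ) (1/2) ∪ Set.Ici (2:ℝ) ⊆ closure oscSᶜ := by
  have h1 : Set.Iio (-2:ℝ) ⊆ oscSᶜ := by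
    intro x hx; simp only [oscS, Set.mem_compl_iff, Set.mem_union, Set.mem_Icc, Set.mem_Iio] at *
    push_neg; constructor <;> intro h <;> linarith
  have h2 : Set.Ioo (-1/2:ℝ) (1/2) ⊆ oscSᶜ := by
    intro x hx; simp only [oscS, Set.mem_compl_iff, Set.mem_union, Set.mem_Icc, Set.mem_Ioo] at *
    push_neg; constructor <;> intro h <;> linarith [hx.1, hx.2]
  have h3 : Set.Ioi (2:ℝ) ⊆ oscSᶜ := by
    intro x hx; simp only [oscS, Set.mem_compl_iff, Set.mem_union, Set.mem_Icc, Set.mem_Ioi] at *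
    push_neg; constructor <;> intro h <;> linarith
  intro x hx
  rcases hx with (hx | hx) | hx
  · exact closure_mono h1 (by rw [closure_Iio]; exact hx)
  · exact closure_mono h2 (by rw [closure_Ioo (by norm_num : (-1/2:ℝ) ≠ 1/2)]; exact hx)
  · exact closure_mono h3 (by rw [closure_Ioi]; exact hx)

/-- vanishing of derivatives on the closed complement region -/
lemma osc_vanish {m : ℝ → ℂ} {n : ℕ} (hm : ContDiff ℝ (n:ℕ) m)
    (hsupp : Function.support m ⊆ oscS) {j : ℕ} (hj : j ≤ n) :
    ∀ x : ℝ, (x ≤ -2 ∨ (-1/2 ≤ x ∧ x ≤ 1/2) ∨ 2 ≤ x) → iteratedDeriv j m x = 0 := by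
  have hcont : Continuous (iteratedDeriv j m) :=
    hm.continuous_iteratedDeriv j (by exact_mod_cast hj)
  have heq : Set.EqOn (iteratedDeriv j m) (fun _ => (0:ℂ)) (closure oscSᶜ) :=
    Set.EqOn.closure (fun x hx => iteratedDeriv_zero_outside hsupp j x hx) hcont continuous_const
  intro x hx
  apply heq
  apply closure_compl_oscS
  rcases hx with hx | hx | hx
  · exact Or.inl (Or.inl hx)
  · exact Or.inl (Or.inr (Set.mem_Icc.mpr hx))
  · exact Or.inr hx

lemma osc_m_vanish {m : ℝ → ℂ} {n : ℕ} (hm : ContDiff ℝ (n:ℕ) m)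
    (hsupp : Function.support m ⊆ oscS) :
    ∀ x : ℝ, (x ≤ -2 ∨ (-1/2 ≤ x ∧ x ≤ 1/2) ∨ 2 ≤ x) → m x = 0 := by
  have := osc_vanish hm hsupp (j := 0) (Nat.zero_le n)
  simpa [iteratedDeriv_zero] using this

lemma osc_integrable (A B : ℝ) {m : ℝ → ℂ} (hc : Continuous m)
    (hsupp : Function.support m ⊆ oscS) :
    MeasureTheory.Integrable (fun x => oscE A B x * m x) := by
  apply Continuous.integrable_of_hasCompactSupport ((oscE_continuous A B).mul hc)
  apply HasCompactSupport.intro (K := Set.Icc (-2:ℝ) 2) isCompact_Icc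
  intro x hx
  have hxS : x ∉ oscS := by
    simp only [Set.mem_Icc, not_and_or, not_le] at hx
    simp only [oscS, Set.mem_union, Set.mem_Icc]
    push_neg
    rcases hx with h | h
    · constructor <;> intro h2 <;> linarith
    · constructor <;> intro h2 <;> linarith
  rw [Pi.mul_apply, Function.support_subset_iff'.mp hsupp x hxS, mul_zero]

lemma osc_trivial (A B : ℝ) {m : ℝ → ℂ} (hc : Continuous m)
    (hsupp : Function.support m ⊆ oscS)
    (hb : ∀ x, ‖m x‖ ≤ 1) : ‖∫ x, oscE A B x * m x‖ ≤ 3 := by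
  have hz : ∀ x ∉ oscS, oscE A B x * m x = 0 := fun x hx => by
    rw [Function.support_subset_iff'.mp hsupp x hx, mul_zero]
  rw [← MeasureTheory.setIntegral_eq_integral_of_forall_compl_eq_zero hz]
  have hvol : (MeasureTheory.volume oscS).toReal ≤ 3 := by
    have : MeasureTheory.volume oscS ≤ ENNReal.ofReal (3/2) + ENNReal.ofReal (3/2) := by
      refine le_trans (MeasureTheory.measure_union_le _ _) ?_
      rw [Real.volume_Icc, Real.volume_Icc]
      norm_num
    calc (MeasureTheory.volume oscS).toReal
        ≤ (ENNReal.ofReal (3/2) + ENNReal.ofReal (3/2)).toReal :=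
          ENNReal.toReal_mono (by finiteness) this
      _ ≤ 3 := by rw [ENNReal.toReal_add (by finiteness) (by finiteness)]; norm_num
  calc ‖∫ x in oscS, oscE A B x * m x‖
      ≤ 1 * (MeasureTheory.volume oscS).toReal := by
        apply MeasureTheory.norm_setIntegral_le_of_norm_le_const
        · exact lt_of_le_of_lt (le_trans (MeasureTheory.measure_mono (by intro x hx; simp [oscS] at hx ⊢; rcases hx with h|h; exacts [Set.mem_Icc.mpr ⟨by linarith [h.1], by linarith [h.2]⟩, Set.mem_Icc.mpr ⟨by linarith [h.1], by linarith [h.2]⟩]) : MeasureTheory.volume oscS ≤ MeasureTheory.volume (Set.Icc (-2:ℝ) 2)) (le_of_eq (Real.volume_Icc))) (by finiteness)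
        · intro x _
          rw [norm_mul, oscE_norm, one_mul]
          exact hb x
    _ ≤ 3 := by rw [one_mul]; exact hvol

lemma osc_integral_eq (A B : ℝ) {m : ℝ → ℂ}
    (hsupp : Function.support m ⊆ oscS) :
    ∫ x, oscE A B x * m x = ∫ x in (-7:ℝ)..7, oscE A B x * m x := by
  rw [intervalIntegral.integral_of_le (by norm_num : (-7:ℝ) ≤ 7)]
  rw [MeasureTheory.setIntegral_eq_integral_of_forall_compl_eq_zero]
  intro x hx
  have hxS : x ∉ oscS := by
    simp only [Set.mem_Ioc, not_and_or, not_lt, not_le] at hx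
    simp only [oscS, Set.mem_union, Set.mem_Icc]
    push_neg
    rcases hx with h | h
    · constructor <;> intro h2 <;> linarith
    · constructor <;> intro h2 <;> linarith
  rw [Function.support_subset_iff'.mp hsupp x hxS, mul_zero]

lemma osc_split3 (A B c c' : ℝ) {m : ℝ → ℂ} (hc : Continuous m)
    (hsupp : Function.support m ⊆ oscS)
    (h1 : (-7:ℝ) ≤ c) (h2 : c ≤ c') (h3 : c' ≤ 7) :
    ∫ x, oscE A B x * m x = (∫ x in (-7:ℝ)..c, oscE A B x * m x)
      + (∫ x in c..c', oscE A B x * m x) + (∫ x in c'..(7:ℝ), oscE A B x * m x) := by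
  have hi : ∀ a b : ℝ, IntervalIntegrable (fun x => oscE A B x * m x) MeasureTheory.volume a b :=
    fun a b => (osc_integrable A B hc hsupp).intervalIntegrable
  have e1 := intervalIntegral.integral_add_adjacent_intervals (hi (-7) c) (hi c c')
  have e2 := intervalIntegral.integral_add_adjacent_intervals (hi (-7) c') (hi c' 7)
  rw [osc_integral_eq A B hsupp, ← e2, ← e1]

lemma osc_split2 (A B : ℝ) {m : ℝ → ℂ} {n : ℕ} (hm : ContDiff ℝ (n:ℕ) m)
    (hsupp : Function.support m ⊆ oscS) :
    ∫ x, oscE A B x * m x = (∫ x in (-2:ℝ)..(-1/2:ℝ), oscE A B x * m x)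
      + (∫ x in (1/2:ℝ)..(2:ℝ), oscE A B x * m x) := by
  have hc : Continuous m := hm.continuous
  have hi : ∀ a b : ℝ, IntervalIntegrable (fun x => oscE A B x * m x) MeasureTheory.volume a b :=
    fun a b => (osc_integrable A B hc hsupp).intervalIntegrable
  have hzero : ∀ a b : ℝ, (∀ x ∈ Set.uIcc a b, m x = 0) →
      (∫ x in a..b, oscE A B x * m x) = 0 := by
    intro a b h
    rw [intervalIntegral.integral_congr (g := fun _ => 0) (fun x hx => by rw [h x hx, mul_zero])]
    simp
  have hv := osc_m_vanish hm hsupp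
  have z1 : (∫ x in (-7:ℝ)..(-2:ℝ), oscE A B x * m x) = 0 := by
    apply hzero
    intro x hx
    rw [Set.uIcc_of_le (by norm_num)] at hx
    exact hv x (Or.inl hx.2)
  have z2 : (∫ x in (-1/2:ℝ)..(1/2:ℝ), oscE A B x * m x) = 0 := by
    apply hzero
    intro x hx
    rw [Set.uIcc_of_le (by norm_num)] at hx
    exact hv x (Or.inr (Or.inl ⟨hx.1, hx.2⟩))
  have z3 : (∫ x in (2:ℝ)..(7:ℝ), oscE A B x * m x) = 0 := by
    apply hzero
    intro x hx
    rw [Set.uIcc_of_le (by norm_num)] at hx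
    exact hv x (Or.inr (Or.inr hx.1))
  have e1 := intervalIntegral.integral_add_adjacent_intervals (hi (-7) (-2)) (hi (-2) (-1/2))
  have e2 := intervalIntegral.integral_add_adjacent_intervals (hi (-7) (-1/2)) (hi (-1/2) (1/2))
  have e3 := intervalIntegral.integral_add_adjacent_intervals (hi (-7) (1/2)) (hi (1/2) 2)
  have e4 := intervalIntegral.integral_add_adjacent_intervals (hi (-7) 2) (hi 2 7)
  rw [osc_integral_eq A B hsupp, ← e4, ← e3, ← e2, ← e1, z1, z2, z3]
  ring

lemma oscP_norm (A B x : ℝ) : ‖oscP A B x‖ = |2*A*x + B| := by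
  unfold oscP
  rw [norm_mul, Complex.norm_I, one_mul, Complex.norm_real, Real.norm_eq_abs]

lemma oscP_hasDerivAt (A B x : ℝ) :
    HasDerivAt (oscP A B) (((2*A:ℝ):ℂ) * Complex.I) x := by
  have h : HasDerivAt (fun x:ℝ => 2*A*x+B) (2*A) x := by
    simpa using ((hasDerivAt_id x).const_mul (2*A)).add_const B
  have := (h.ofReal_comp).const_mul Complex.I
  unfold oscP
  exact this.congr_deriv (by ring)

lemma osc_side (A B a b lam del : ℝ) {m : ℝ → ℂ}
    (hA : A ≠ 0)
    (hlam : ∀ x : ℝ, 2*A*x + B = 2*A*(x - lam))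
    (hab : a ≤ b) (hdel : 0 < del)
    (hsep : ∀ x ∈ Set.Icc a b, del ≤ |x - lam|)
    (hub : ∀ x ∈ Set.Icc a b, |x - lam| ≤ 12)
    (hmd : Differentiable ℝ m) (hm1c : Continuous (deriv m))
    (hm0 : ∀ x, ‖m x‖ ≤ 1) (hm1 : ∀ x, ‖deriv m x‖ ≤ 1) :
    ‖∫ x in a..b, oscE A B x * m x‖ ≤ 15/(2* |A| *del) := by
  have huIcc : Set.uIcc a b = Set.Icc a b := Set.uIcc_of_le hab
  have hPnorm : ∀ x ∈ Set.Icc a b, ‖oscP A B x‖ = 2* |A| * |x - lam| := by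
    intro x hx
    rw [oscP_norm, hlam x, abs_mul, abs_mul]
    norm_num
  have hPlb : ∀ x ∈ Set.Icc a b, 2* |A| *del ≤ ‖oscP A B x‖ := by
    intro x hx
    rw [hPnorm x hx]
    have := hsep x hx
    have hA' : 0 < |A| := abs_pos.mpr hA
    nlinarith
  have hAd : 0 < 2* |A| *del := by positivity
  have hPne : ∀ x ∈ Set.Icc a b, oscP A B x ≠ 0 := by
    intro x hx h0
    have h := hPlb x hx
    rw [h0] at h
    simp at h
    linarith
  set u : ℝ → ℂ := fun x => m x / oscP A B x with hu_def
  set u' : ℝ → ℂ := fun x =>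
    (deriv m x * oscP A B x - m x * (((2*A:ℝ):ℂ) * Complex.I)) / (oscP A B x)^2 with hu'_def
  have hu : ∀ x ∈ Set.uIcc a b, HasDerivAt u (u' x) x := by
    intro x hx
    rw [huIcc] at hx
    exact ((hmd x).hasDerivAt).div (oscP_hasDerivAt A B x) (hPne x hx)
  have hu'c : ContinuousOn u' (Set.uIcc a b) := by
    rw [huIcc]
    apply ContinuousOn.div
    · exact ((hm1c.continuousOn).mul (oscP_continuous A B).continuousOn).sub
        ((hmd.continuous.continuousOn).mul continuousOn_const)
    · exact ((oscP_continuous A B).pow 2).continuousOn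
    · intro x hx
      exact pow_ne_zero 2 (hPne x hx)
  have hibp := osc_ibp A B a b u u' hu hu'c
  have hcong : Set.EqOn (fun x => oscE A B x * (oscP A B x * u x) + oscE A B x * u' x)
      (fun x => oscE A B x * m x + oscE A B x * u' x) (Set.uIcc a b) := by
    intro x hx
    rw [huIcc] at hx
    simp only [hu_def, mul_div_cancel₀ _ (hPne x hx)]
  rw [intervalIntegral.integral_congr hcong] at hibp
  have hiEm : IntervalIntegrable (fun x => oscE A B x * m x) MeasureTheory.volume a b := by
    apply ContinuousOn.intervalIntegrable
    exact ((oscE_continuous A B).continuousOn).mul (hmd.continuous.continuousOn)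
  have hiEu' : IntervalIntegrable (fun x => oscE A B x * u' x) MeasureTheory.volume a b := by
    apply ContinuousOn.intervalIntegrable
    exact ((oscE_continuous A B).continuousOn).mul hu'c
  rw [intervalIntegral.integral_add hiEm hiEu'] at hibp
  have hmain : (∫ x in a..b, oscE A B x * m x)
      = oscE A B b * u b - oscE A B a * u a - ∫ x in a..b, oscE A B x * u' x := by
    rw [← hibp]; ring
  -- boundary bounds
  have hbnd : ∀ x ∈ Set.Icc a b, ‖oscE A B x * u x‖ ≤ 1/(2* |A| *del) := by
    intro x hx
    rw [norm_mul, oscE_norm, one_mul, hu_def]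
    simp only [norm_div]
    have h1 : ‖m x‖ ≤ 1 := hm0 x
    have h2 := hPlb x hx
    have h3 : (0:ℝ) < ‖oscP A B x‖ := lt_of_lt_of_le hAd h2
    rw [div_le_div_iff₀ h3 hAd]
    nlinarith [norm_nonneg (m x)]
  -- integrand bound
  have hg : ∀ x ∈ Set.Icc a b, ‖oscE A B x * u' x‖ ≤ (13/(2* |A|)) * ((x - lam)^2)⁻¹ := by
    intro x hx
    rw [norm_mul, oscE_norm, one_mul, hu'_def]
    simp only [norm_div]
    have hsx := hsep x hx
    have hxl : 0 < |x - lam| := lt_of_lt_of_le hdel hsx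
    have hA' : 0 < |A| := abs_pos.mpr hA
    have hnum : ‖deriv m x * oscP A B x - m x * (((2*A:ℝ):ℂ) * Complex.I)‖
        ≤ 2* |A| * |x - lam| + 2* |A| := by
      refine le_trans (norm_sub_le _ _) ?_
      rw [norm_mul, norm_mul, norm_mul, Complex.norm_I, mul_one, Complex.norm_real,
        Real.norm_eq_abs]
      have e1 : ‖oscP A B x‖ = 2* |A| * |x - lam| := hPnorm x hx
      have e2 : |2*A| = 2* |A| := by rw [abs_mul]; norm_num
      rw [e1, e2]
      nlinarith [hm1 x, hm0 x, norm_nonneg (deriv m x), norm_nonneg (m x),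
        mul_pos (mul_pos (by norm_num : (0:ℝ)<2) hA') hxl]
    have hne0 : x - lam ≠ 0 := abs_pos.mp hxl
    have hden : ‖(oscP A B x)^2‖ = (2* |A|)^2 * (x - lam)^2 := by
      rw [norm_pow, hPnorm x hx, mul_pow]
      congr 1
      exact sq_abs _
    rw [hden]
    have hx2 : (0:ℝ) < (x - lam)^2 := by positivity
    have hd2 : (0:ℝ) < (2* |A|)^2 * (x - lam)^2 :=
      mul_pos (pow_pos (by linarith) 2) hx2
    rw [div_le_iff₀ hd2]
    have h12 := hub x hx
    have hsq : |x - lam| * |x - lam| = (x - lam)^2 := by rw [abs_mul_abs_self]; ring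
    calc ‖deriv m x * oscP A B x - m x * (((2*A:ℝ):ℂ) * Complex.I)‖
        ≤ 2* |A| * |x - lam| + 2* |A| := hnum
      _ ≤ 13/(2* |A|) * ((x - lam)^2)⁻¹ * ((2* |A|)^2 * (x - lam)^2) := by
          rw [show 13/(2* |A|) * ((x - lam)^2)⁻¹ * ((2* |A|)^2 * (x - lam)^2)
              = 26* |A| * ((x - lam)^2 * ((x - lam)^2)⁻¹) by field_simp; ring]
          rw [mul_inv_cancel₀ (ne_of_gt hx2), mul_one]
          nlinarith
  -- integral of the dominating function
  have hInt2 : (∫ x in a..b, ((x - lam)^2)⁻¹) ≤ del⁻¹ := by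
    have hne : ∀ x ∈ Set.Icc a b, x - lam ≠ 0 := by
      intro x hx h0
      have := hsep x hx
      rw [h0] at this
      simp at this
      linarith
    have hder : ∀ x ∈ Set.uIcc a b, HasDerivAt (fun y => -(y - lam)⁻¹) (((x - lam)^2)⁻¹) x := by
      intro x hx
      rw [huIcc] at hx
      have h1 : HasDerivAt (fun y : ℝ => y - lam) 1 x := by
        simpa using (hasDerivAt_id x).sub_const lam
      have h2 := (h1.inv (hne x hx)).neg
      exact h2.congr_deriv (by rw [neg_div, neg_neg, one_div])
    have hint : IntervalIntegrable (fun x => ((x - lam)^2)⁻¹) MeasureTheory.volume a b := by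
      apply ContinuousOn.intervalIntegrable
      rw [huIcc]
      apply ContinuousOn.inv₀ (by fun_prop)
      intro x hx
      exact pow_ne_zero 2 (hne x hx)
    rw [intervalIntegral.integral_eq_sub_of_hasDerivAt hder hint]
    -- goal : -(b-lam)⁻¹ - -(a-lam)⁻¹ ≤ del⁻¹
    have hcase : lam < a ∨ b < lam := by
      by_contra hcon
      push_neg at hcon
      have hmem : lam ∈ Set.Icc a b := ⟨hcon.1, hcon.2⟩
      have := hsep lam hmem
      simp at this
      linarith
    have ha' := hsep a (Set.left_mem_Icc.mpr hab)
    have hb' := hsep b (Set.right_mem_Icc.mpr hab)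
    rcases hcase with h | h
    · have h1 : del ≤ a - lam := by
        rw [abs_of_pos (by linarith : (0:ℝ) < a - lam)] at ha'
        linarith
      have h2 : 0 < b - lam := by linarith
      have h3 : (a - lam)⁻¹ ≤ del⁻¹ := by
        apply inv_anti₀ hdel h1
      have h4 : 0 < (b - lam)⁻¹ := by positivity
      linarith
    · have h1 : del ≤ lam - b := by
        rw [abs_of_neg (by linarith : b - lam < 0)] at hb'
        linarith
      have h2 : (lam - b)⁻¹ ≤ del⁻¹ := inv_anti₀ hdel h1
      have h3 : 0 < lam - a := by linarith
      have h4 : 0 < (lam - a)⁻¹ := by positivity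
      have e1 : -(b - lam)⁻¹ = (lam - b)⁻¹ := by
        rw [show b - lam = -(lam - b) by ring, inv_neg, neg_neg]
      have e2 : -(a - lam)⁻¹ = (lam - a)⁻¹ := by
        rw [show a - lam = -(lam - a) by ring, inv_neg, neg_neg]
      linarith
  -- put it together
  have hnormint : ‖∫ x in a..b, oscE A B x * u' x‖ ≤ 13/(2* |A| *del) := by
    have h1 : ‖∫ x in a..b, oscE A B x * u' x‖ ≤ ∫ x in a..b, ‖oscE A B x * u' x‖ := by
      apply intervalIntegral.norm_integral_le_integral_norm hab
    have hnc : IntervalIntegrable (fun x => ‖oscE A B x * u' x‖) MeasureTheory.volume a b := by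
      apply ContinuousOn.intervalIntegrable
      exact (((oscE_continuous A B).continuousOn).mul hu'c).norm
    have hgint : IntervalIntegrable (fun x => 13/(2* |A|) * ((x - lam)^2)⁻¹)
        MeasureTheory.volume a b := by
      apply ContinuousOn.intervalIntegrable
      apply ContinuousOn.mul continuousOn_const
      apply ContinuousOn.inv₀ (by fun_prop)
      intro x hx
      rw [huIcc] at hx
      have := hsep x hx
      have h0 : x - lam ≠ 0 := by
        intro h
        rw [h] at this
        simp at this
        linarith
      positivity
    have h2 : (∫ x in a..b, ‖oscE A B x * u' x‖)
        ≤ ∫ x in a..b, 13/(2* |A|) * ((x - lam)^2)⁻¹ := by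
      apply intervalIntegral.integral_mono_on hab hnc hgint
      exact hg
    have hA' : 0 < |A| := abs_pos.mpr hA
    have h3 : (∫ x in a..b, 13/(2* |A|) * ((x - lam)^2)⁻¹) ≤ 13/(2* |A| * del) := by
      rw [intervalIntegral.integral_const_mul]
      calc 13/(2* |A|) * ∫ x in a..b, ((x - lam)^2)⁻¹
          ≤ 13/(2* |A|) * del⁻¹ := by
            apply mul_le_mul_of_nonneg_left hInt2 (by positivity)
        _ = 13/(2* |A| * del) := by field_simp
    linarith
  rw [hmain]
  have hb1 := hbnd b (Set.right_mem_Icc.mpr hab)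
  have hb2 := hbnd a (Set.left_mem_Icc.mpr hab)
  calc ‖oscE A B b * u b - oscE A B a * u a - ∫ x in a..b, oscE A B x * u' x‖
      ≤ ‖oscE A B b * u b - oscE A B a * u a‖ + ‖∫ x in a..b, oscE A B x * u' x‖ :=
        norm_sub_le _ _
    _ ≤ (‖oscE A B b * u b‖ + ‖oscE A B a * u a‖) + ‖∫ x in a..b, oscE A B x * u' x‖ := by
        have := norm_sub_le (oscE A B b * u b) (oscE A B a * u a)
        linarith
    _ ≤ 1/(2* |A| *del) + 1/(2* |A| *del) + 13/(2* |A| *del) := by linarith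
    _ = 15/(2* |A| *del) := by ring

lemma osc_rpow_eq (t : ℝ) (ht : 0 ≤ t) : t ^ (-(1:ℝ)/2) = (Real.sqrt t)⁻¹ := by
  rw [Real.sqrt_eq_rpow, ← Real.rpow_neg ht]
  norm_num

lemma osc_case1 (d : ℕ) (A B : ℝ) {m : ℝ → ℂ}
    (hm : ContDiff ℝ ((d+2 : ℕ) : ℕ) m)
    (hsupp : Function.support m ⊆ oscS)
    (hbound : ∀ α : ℕ, α ≤ d + 2 → ∀ l : ℝ, ‖iteratedDeriv α m l‖ ≤ 1)
    (hB : B ≠ 0) (h1 : 1/10 ≤ |A / B|) (h2 : |A / B| ≤ 10) :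
    ‖∫ x, oscE A B x * m x‖ ≤ 30 * (1 + |A|) ^ (-(1:ℝ)/2) := by
  have hm0 : ∀ x, ‖m x‖ ≤ 1 := by
    intro x
    have := hbound 0 (by omega) x
    simpa [iteratedDeriv_zero] using this
  have hm1 : ∀ x, ‖deriv m x‖ ≤ 1 := by
    intro x
    have := hbound 1 (by omega) x
    simpa [iteratedDeriv_one] using this
  have hmc : Continuous m := hm.continuous
  have hmd : Differentiable ℝ m := hm.differentiable (by simp)
  have hm1c : Continuous (deriv m) := hm.continuous_deriv (by exact_mod_cast Nat.one_le_iff_ne_zero.mpr (by omega))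
  have hA : A ≠ 0 := by
    intro h0
    rw [h0] at h1
    simp at h1
    linarith
  have hA' : 0 < |A| := abs_pos.mpr hA
  have hB' : 0 < |B| := abs_pos.mpr hB
  have hBA : |B| ≤ 10 * |A| := by
    rw [abs_div, le_div_iff₀ hB'] at h1
    linarith
  have hone : (0:ℝ) < 1 + |A| := by positivity
  rw [osc_rpow_eq (1 + |A|) (by positivity)]
  have hsq1 : 0 < Real.sqrt (1 + |A|) := Real.sqrt_pos.mpr hone
  rcases le_or_gt |A| 1 with hAsmall | hAbig
  · -- trivial bound
    have htriv := osc_trivial A B hmc hsupp hm0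
    have hs2 : Real.sqrt (1 + |A|) ≤ Real.sqrt 2 := Real.sqrt_le_sqrt (by linarith)
    have hs2' : Real.sqrt 2 ≤ 2 := by
      nlinarith [Real.sq_sqrt (by norm_num : (0:ℝ) ≤ 2), Real.sqrt_nonneg 2]
    have hinv : (2:ℝ)⁻¹ ≤ (Real.sqrt (1 + |A|))⁻¹ :=
      inv_anti₀ hsq1 (le_trans hs2 hs2')
    have h30 : (3:ℝ) ≤ 30 * (Real.sqrt (1 + |A|))⁻¹ := by linarith
    exact le_trans htriv h30
  · set lam := -B/(2*A) with hlam_def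
    have hlam : ∀ x : ℝ, 2*A*x + B = 2*A*(x - lam) := by
      intro x
      rw [hlam_def]; field_simp
      ring
    have hlam5 : |lam| ≤ 5 := by
      rw [hlam_def, abs_div, abs_neg, abs_mul]
      have h2A : (0:ℝ) < |(2:ℝ)| * |A| := by rw [_root_.abs_two]; linarith
      rw [div_le_iff₀ h2A, _root_.abs_two]
      nlinarith
    set s := Real.sqrt |A| with hs_def
    have hspos : 0 < s := Real.sqrt_pos.mpr hA'
    have hss : s * s = |A| := Real.mul_self_sqrt (le_of_lt hA')
    have hs1 : 1 ≤ s := by nlinarith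
    set del := s⁻¹ with hdel_def
    have hdelpos : 0 < del := by positivity
    have hdel1 : del ≤ 1 := by
      rw [hdel_def]
      rw [inv_le_one_iff₀]
      right; exact hs1
    have hsplit := osc_split3 A B (lam - del) (lam + del) hmc hsupp
      (by cases abs_le.mp hlam5; linarith)
      (by linarith)
      (by cases abs_le.mp hlam5; linarith)
    have hlam' := abs_le.mp hlam5
    -- middle piece
    have hmid : ‖∫ x in (lam - del)..(lam + del), oscE A B x * m x‖ ≤ 2 * del := by
      have := intervalIntegral.norm_integral_le_of_norm_le_const (C := 1)
        (f := fun x => oscE A B x * m x) (a := lam - del) (b := lam + del)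
        (fun x _ => by rw [norm_mul, oscE_norm, one_mul]; exact hm0 x)
      calc ‖∫ x in (lam - del)..(lam + del), oscE A B x * m x‖
          ≤ 1 * |(lam + del) - (lam - del)| := this
        _ = 2 * del := by rw [one_mul, show (lam + del) - (lam - del) = 2*del by ring,
              abs_of_pos (by linarith)]
    -- right piece
    have hright : ‖∫ x in (lam + del)..(7:ℝ), oscE A B x * m x‖ ≤ 15/(2 * |A| * del) := by
      apply osc_side A B (lam + del) 7 lam del hA hlam (by linarith) hdelpos
      · intro x hx
        have : del ≤ x - lam := by have := hx.1; linarith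
        exact le_trans this (le_abs_self _)
      · intro x hx
        rw [abs_le]
        constructor
        · have := hx.1; linarith
        · have := hx.2; linarith
      · exact hmd
      · exact hm1c
      · exact hm0
      · exact hm1
    -- left piece
    have hleft : ‖∫ x in (-7:ℝ)..(lam - del), oscE A B x * m x‖ ≤ 15/(2 * |A| * del) := by
      apply osc_side A B (-7) (lam - del) lam del hA hlam (by linarith) hdelpos
      · intro x hx
        have : del ≤ lam - x := by have := hx.2; linarith
        calc del ≤ lam - x := this
          _ ≤ |x - lam| := by rw [abs_sub_comm]; exact le_abs_self _
      · intro x hx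
        rw [abs_le]
        constructor
        · have := hx.1; linarith
        · have := hx.2; linarith
      · exact hmd
      · exact hm1c
      · exact hm0
      · exact hm1
    -- combine
    have htot : ‖∫ x, oscE A B x * m x‖ ≤ 2*del + 15/(2 * |A| * del) + 15/(2 * |A| * del) := by
      rw [hsplit]
      exact le_trans norm_add₃_le (by linarith)
    have hsum : 2*del + 15/(2 * |A| * del) + 15/(2 * |A| * del) = 17/s := by
      rw [hdel_def, ← hss]
      field_simp
      ring
    set t := Real.sqrt (1 + |A|) with ht_def
    have htpos : 0 < t := hsq1
    have htt : t * t = 1 + |A| := Real.mul_self_sqrt (by positivity)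
    have hts : t ≤ Real.sqrt 2 * s := by
      have h1' : t ≤ Real.sqrt (2 * |A|) := Real.sqrt_le_sqrt (by linarith)
      rw [Real.sqrt_mul (by norm_num : (0:ℝ) ≤ 2) |A|] at h1'
      exact h1'
    have hsqrt2 : Real.sqrt 2 ≤ 1.5 := by
      nlinarith [Real.sq_sqrt (by norm_num : (0:ℝ) ≤ 2), Real.sqrt_nonneg 2]
    have hfin : 17/s ≤ 30 * t⁻¹ := by
      rw [show (30:ℝ) * t⁻¹ = 30/t by rw [div_eq_mul_inv]]
      rw [div_le_div_iff₀ hspos htpos]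
      have h15 : t ≤ 1.5 * s := le_trans hts (mul_le_mul_of_nonneg_right hsqrt2 hspos.le)
      linarith
    calc ‖∫ x, oscE A B x * m x‖ ≤ 2*del + 15/(2 * |A| * del) + 15/(2 * |A| * del) := htot
      _ = 17/s := hsum
      _ ≤ 30 * t⁻¹ := hfin

noncomputable def oscF (A B : ℝ) (m : ℝ → ℂ) : ℕ → ℝ → ℂ
  | 0 => m
  | k+1 => deriv (fun x => oscF A B m k x / oscP A B x)

lemma oscP_ne (A B x : ℝ) (h : 2*A*x + B ≠ 0) : oscP A B x ≠ 0 :=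
  mul_ne_zero Complex.I_ne_zero (Complex.ofReal_ne_zero.mpr h)

lemma oscU_open (A B : ℝ) : IsOpen {y : ℝ | 2*A*y + B ≠ 0} :=
  IsOpen.preimage (show Continuous fun y : ℝ => 2*A*y + B by fun_prop)
    (isOpen_ne : IsOpen {z : ℝ | z ≠ 0})

lemma oscF_rep (A B : ℝ) (m : ℝ → ℂ) (d : ℕ)
    (hm : ContDiff ℝ ((d + 2 : ℕ) : ℕ) m) :
    ∀ k, k ≤ d → ∃ c : ℕ → ℝ,
      (∀ j, |c j| ≤ (2*(d:ℝ)+2)^k) ∧ (∀ j, k < j → c j = 0) ∧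
      ∀ x : ℝ, 2*A*x + B ≠ 0 →
        oscF A B m k x = ∑ j ∈ Finset.range (d+1),
          ((c j : ℝ) : ℂ) * iteratedDeriv j m x * (((2*A:ℝ):ℂ) * Complex.I)^(k-j)
            * (oscP A B x)^((j:ℤ) - 2*(k:ℤ)) := by
  intro k
  induction k with
  | zero =>
    intro _
    refine ⟨fun j => if j = 0 then 1 else 0, ?_, ?_, ?_⟩
    · intro j
      by_cases h : j = 0 <;> simp [h]
    · intro j hj
      simp [show j ≠ 0 by omega]
    · intro x hx
      rw [Finset.sum_eq_single 0]
      · simp [oscF, iteratedDeriv_zero]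
      · intro b _ hb
        simp [hb]
      · intro h
        exact absurd (Finset.mem_range.mpr (by omega)) h
  | succ k ih =>
    intro hk1
    obtain ⟨c, hbd, hz, hrep⟩ := ih (by omega)
    set C : ℂ := ((2*A:ℝ):ℂ) * Complex.I with hC_def
    refine ⟨fun j => (if j = 0 then (0:ℝ) else c (j-1)) + ((j:ℝ) - (2*k+1)) * c j, ?_, ?_, ?_⟩
    · intro j
      have hpow : (0:ℝ) ≤ (2*(d:ℝ)+2)^k := by positivity
      have hite : |if j = 0 then (0:ℝ) else c (j-1)| ≤ (2*(d:ℝ)+2)^k := by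
        by_cases h : j = 0
        · simp [h]; positivity
        · simp [h]; exact hbd (j-1)
      have hstep : (2*(d:ℝ)+2)^(k+1) = (2*(d:ℝ)+2)^k * (2*(d:ℝ)+2) := pow_succ _ _
      by_cases hjk : j ≤ k
      · have hco : |(j:ℝ) - (2*k+1)| ≤ 2*(d:ℝ)+1 := by
          rw [abs_le]
          have hj' : (j:ℝ) ≤ (k:ℝ) := by exact_mod_cast hjk
          have hk' : (k:ℝ) ≤ (d:ℝ) := by exact_mod_cast (by omega : k ≤ d)
          have hj0 : (0:ℝ) ≤ (j:ℝ) := Nat.cast_nonneg j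
          constructor <;> linarith
        calc |(if j = 0 then (0:ℝ) else c (j-1)) + ((j:ℝ) - (2*k+1)) * c j|
            ≤ |if j = 0 then (0:ℝ) else c (j-1)| + |(j:ℝ) - (2*k+1)| * |c j| := by
              rw [← abs_mul]; exact abs_add_le _ _
          _ ≤ (2*(d:ℝ)+2)^k + (2*(d:ℝ)+1) * (2*(d:ℝ)+2)^k := by
              have := hbd j
              have h1 : |(j:ℝ) - (2*k+1)| * |c j| ≤ (2*(d:ℝ)+1) * (2*(d:ℝ)+2)^k := by
                apply mul_le_mul hco this (abs_nonneg _) (by positivity)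
              linarith
          _ ≤ (2*(d:ℝ)+2)^(k+1) := by rw [hstep]; nlinarith
      · have hcj : c j = 0 := hz j (by omega)
        show |(if j = 0 then (0:ℝ) else c (j-1)) + ((j:ℝ) - (2*k+1)) * c j| ≤ (2*(d:ℝ)+2)^(k+1)
        rw [hcj]
        simp only [mul_zero, add_zero]
        calc |if j = 0 then (0:ℝ) else c (j-1)| ≤ (2*(d:ℝ)+2)^k := hite
          _ ≤ (2*(d:ℝ)+2)^(k+1) := by rw [hstep]; nlinarith
    · intro j hj
      have h1 : c (j-1) = 0 := hz (j-1) (by omega)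
      have h2 : c j = 0 := hz j (by omega)
      simp [h1, h2, show j ≠ 0 by omega]
    · intro x hx
      have hPne : oscP A B x ≠ 0 := oscP_ne A B x hx
      set g : ℝ → ℂ := fun y => ∑ j ∈ Finset.range (d+1),
        ((c j : ℝ) : ℂ) * iteratedDeriv j m y * C^(k-j) * (oscP A B y)^((j:ℤ) - 2*(k:ℤ) - 1)
        with hg_def
      have heq : (fun y => oscF A B m k y / oscP A B y) =ᶠ[nhds x] g := by
        filter_upwards [(oscU_open A B).mem_nhds hx] with y hy
        have hPy : oscP A B y ≠ 0 := oscP_ne A B y hy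
        rw [hrep y hy, Finset.sum_div]
        apply Finset.sum_congr rfl
        intro j _
        rw [zpow_sub_one₀ hPy ((j:ℤ) - 2*(k:ℤ)), div_eq_mul_inv]
        ring
      have hder : ∀ j ∈ Finset.range (d+1),
          HasDerivAt (fun y => ((c j : ℝ) : ℂ) * iteratedDeriv j m y * C^(k-j)
              * (oscP A B y)^((j:ℤ) - 2*(k:ℤ) - 1))
            (((c j : ℝ) : ℂ) * iteratedDeriv (j+1) m x * C^(k-j)
                * (oscP A B x)^((j:ℤ) - 2*(k:ℤ) - 1)
              + (((c j : ℝ) : ℂ) * iteratedDeriv j m x * C^(k-j))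
                * ((((j:ℤ) - 2*(k:ℤ) - 1 : ℤ) : ℂ) * (oscP A B x)^((j:ℤ) - 2*(k:ℤ) - 1 - 1) * C)) x := by
        intro j hj
        have hjd : j ≤ d := by
          have := Finset.mem_range.mp hj; omega
        have h1 : HasDerivAt (iteratedDeriv j m) (iteratedDeriv (j+1) m x) x := by
          rw [iteratedDeriv_succ]
          apply hasDerivAt_deriv_iff.mpr
          exact (hm.differentiable_iteratedDeriv j (by exact_mod_cast Nat.lt_of_le_of_lt hjd (by omega))) x
        have h2 : HasDerivAt (fun y => (oscP A B y)^((j:ℤ) - 2*(k:ℤ) - 1))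
            ((((j:ℤ) - 2*(k:ℤ) - 1 : ℤ) : ℂ) * (oscP A B x)^((j:ℤ) - 2*(k:ℤ) - 1 - 1) * C) x := by
          have := (hasDerivAt_zpow ((j:ℤ) - 2*(k:ℤ) - 1) (oscP A B x) (Or.inl hPne)).comp
            x (oscP_hasDerivAt A B x)
          simpa [hC_def, mul_comm, mul_assoc, mul_left_comm, Function.comp_def] using this
        exact ((h1.const_mul ((c j : ℝ) : ℂ)).mul_const (C^(k-j))).mul h2
      have hg : HasDerivAt g (∑ j ∈ Finset.range (d+1),
          (((c j : ℝ) : ℂ) * iteratedDeriv (j+1) m x * C^(k-j)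
              * (oscP A B x)^((j:ℤ) - 2*(k:ℤ) - 1)
            + (((c j : ℝ) : ℂ) * iteratedDeriv j m x * C^(k-j))
              * ((((j:ℤ) - 2*(k:ℤ) - 1 : ℤ) : ℂ) * (oscP A B x)^((j:ℤ) - 2*(k:ℤ) - 1 - 1) * C))) x :=
        HasDerivAt.fun_sum hder
      have hF1 : oscF A B m (k+1) x = deriv g x := by
        show deriv (fun y => oscF A B m k y / oscP A B y) x = deriv g x
        exact Filter.EventuallyEq.deriv_eq heq
      rw [hF1, hg.deriv]
      -- now rearrange the sum
      rw [Finset.sum_add_distrib]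
      have hsplit2 : ∀ j ∈ Finset.range (d+1),
          ((((if j = 0 then (0:ℝ) else c (j-1)) + ((j:ℝ) - (2*k+1)) * c j : ℝ)) : ℂ)
              * iteratedDeriv j m x * C^(k+1-j) * (oscP A B x)^((j:ℤ) - 2*((k+1:ℕ):ℤ))
            = (((if j = 0 then (0:ℝ) else c (j-1)) : ℝ) : ℂ)
              * iteratedDeriv j m x * C^(k+1-j) * (oscP A B x)^((j:ℤ) - 2*((k+1:ℕ):ℤ))
            + ((((j:ℝ) - (2*k+1)) * c j : ℝ) : ℂ)
              * iteratedDeriv j m x * C^(k+1-j) * (oscP A B x)^((j:ℤ) - 2*((k+1:ℕ):ℤ)) := by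
        intro j _
        push_cast
        ring
      rw [Finset.sum_congr rfl hsplit2, Finset.sum_add_distrib]
      congr 1
      · -- first sums : shift of index
        rw [Finset.sum_range_succ' (fun j => (((if j = 0 then (0:ℝ) else c (j-1)) : ℝ) : ℂ)
          * iteratedDeriv j m x * C^(k+1-j) * (oscP A B x)^((j:ℤ) - 2*((k+1:ℕ):ℤ))) d]
        rw [Finset.sum_range_succ (fun j => ((c j : ℝ) : ℂ) * iteratedDeriv (j+1) m x * C^(k-j)
          * (oscP A B x)^((j:ℤ) - 2*(k:ℤ) - 1)) d]
        have hcd : c d = 0 := hz d (by omega)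
        rw [hcd]
        simp only [↓reduceIte, Complex.ofReal_zero, zero_mul, add_zero, mul_zero]
        apply Finset.sum_congr rfl
        intro j _
        rw [if_neg (show ¬(j + 1 = 0) by omega), Nat.add_sub_cancel,
          show k + 1 - (j + 1) = k - j by omega,
          show (((j+1:ℕ)):ℤ) - 2*((k+1:ℕ):ℤ) = (j:ℤ) - 2*(k:ℤ) - 1 by push_cast; ring]
      · -- second sums : termwise
        apply Finset.sum_congr rfl
        intro j hj
        by_cases hjk : j ≤ k
        · have he1 : k + 1 - j = (k - j) + 1 := by omega
          have he2 : (j:ℤ) - 2*((k+1:ℕ):ℤ) = (j:ℤ) - 2*(k:ℤ) - 1 - 1 := by push_cast; ring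
          rw [he1, pow_succ, he2]
          push_cast
          ring
        · have hcj : c j = 0 := hz j (by omega)
          rw [hcj]
          push_cast
          ring

lemma oscC_norm (A : ℝ) : ‖((2*A:ℝ):ℂ) * Complex.I‖ = 2*|A| := by
  rw [norm_mul, Complex.norm_I, mul_one, Complex.norm_real, Real.norm_eq_abs, abs_mul,
    _root_.abs_two]

lemma oscF_norm_bound (A B ρ : ℝ) (d k : ℕ) (x : ℝ) {m : ℝ → ℂ}
    (hm : ContDiff ℝ ((d + 2 : ℕ) : ℕ) m)
    (hmb : ∀ α : ℕ, α ≤ d + 2 → ∀ l : ℝ, ‖iteratedDeriv α m l‖ ≤ 1)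
    (hρ : 0 < ρ) (hx : ρ ≤ |2*A*x + B|) (hA4 : 2*|A| ≤ 4*ρ) (hk : k ≤ d) :
    ‖oscF A B m k x‖ ≤ ((d:ℝ)+1) * ((2*(d:ℝ)+2)^k * 4^k / ρ^k) := by
  obtain ⟨c, hbd, hz, hrep⟩ := oscF_rep A B m d hm k hk
  have hxne : 2*A*x + B ≠ 0 := by
    intro h0
    rw [h0] at hx
    simp at hx
    linarith
  rw [hrep x hxne]
  refine le_trans (norm_sum_le _ _) ?_
  have hterm : ∀ j ∈ Finset.range (d+1),
      ‖((c j : ℝ) : ℂ) * iteratedDeriv j m x * (((2*A:ℝ):ℂ) * Complex.I)^(k-j)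
        * (oscP A B x)^((j:ℤ) - 2*(k:ℤ))‖ ≤ (2*(d:ℝ)+2)^k * 4^k / ρ^k := by
    intro j hj
    by_cases hjk : j ≤ k
    · rw [norm_mul, norm_mul, norm_mul, norm_pow, norm_zpow, oscC_norm,
        Complex.norm_real, Real.norm_eq_abs, oscP_norm]
      have h1 : |c j| ≤ (2*(d:ℝ)+2)^k := hbd j
      have h2 : ‖iteratedDeriv j m x‖ ≤ 1 := hmb j (by omega) x
      have h3 : (2*|A|)^(k-j) ≤ (4*ρ)^(k-j) := pow_le_pow_left₀ (by positivity) hA4 _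
      have hze : ((j:ℤ) - 2*(k:ℤ)) = -(((2*k - j : ℕ) : ℤ)) := by
        push_cast [Nat.cast_sub (by omega : j ≤ 2*k)]
        ring
      have h4 : |2*A*x + B| ^ ((j:ℤ) - 2*(k:ℤ)) ≤ (ρ^(2*k-j))⁻¹ := by
        rw [hze, zpow_neg, zpow_natCast]
        exact inv_anti₀ (pow_pos hρ _) (pow_le_pow_left₀ hρ.le hx _)
      have h5 : (0:ℝ) ≤ |2*A*x+B| ^ ((j:ℤ) - 2*(k:ℤ)) := by positivity
      have h6 : (0:ℝ) ≤ (2*|A|)^(k-j) := by positivity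
      calc |c j| * ‖iteratedDeriv j m x‖ * (2*|A|)^(k-j) * |2*A*x+B| ^ ((j:ℤ) - 2*(k:ℤ))
          ≤ (2*(d:ℝ)+2)^k * 1 * (4*ρ)^(k-j) * (ρ^(2*k-j))⁻¹ := by
            apply mul_le_mul (mul_le_mul (mul_le_mul h1 h2 (norm_nonneg _) (by positivity))
              h3 h6 (by positivity)) h4 h5 (by positivity)
        _ = (2*(d:ℝ)+2)^k * (4^(k-j) / ρ^k) := by
            rw [mul_pow, show 2*k-j = (k-j)+k by omega, pow_add]
            have : (0:ℝ) < ρ^(k-j) := pow_pos hρ _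
            field_simp
        _ ≤ (2*(d:ℝ)+2)^k * 4^k / ρ^k := by
            rw [mul_div_assoc]
            have h7 : (4:ℝ)^(k-j) ≤ 4^k := pow_le_pow_right₀ (by norm_num) (by omega)
            exact mul_le_mul_of_nonneg_left
              ((div_le_div_iff_of_pos_right (pow_pos hρ k)).mpr h7) (by positivity)
    · rw [hz j (by omega)]
      simp only [Complex.ofReal_zero, zero_mul, norm_zero]
      positivity
  refine le_trans (Finset.sum_le_sum hterm) ?_
  rw [Finset.sum_const, Finset.card_range, nsmul_eq_mul]
  apply mul_le_mul_of_nonneg_right ?_ (by positivity)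
  push_cast
  linarith

lemma oscF_continuousOn (A B : ℝ) {m : ℝ → ℂ} (d : ℕ)
    (hm : ContDiff ℝ ((d + 2 : ℕ) : ℕ) m) (k : ℕ) (hk : k ≤ d) :
    ContinuousOn (oscF A B m k) {y : ℝ | 2*A*y + B ≠ 0} := by
  obtain ⟨c, _, _, hrep⟩ := oscF_rep A B m d hm k hk
  apply ContinuousOn.congr ?_ (fun x hx => hrep x hx)
  apply continuousOn_finset_sum
  intro j hj
  have hjd : j ≤ d + 2 := by
    have := Finset.mem_range.mp hj; omega
  refine ContinuousOn.mul (ContinuousOn.mul (ContinuousOn.mul continuousOn_const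
    ((hm.continuous_iteratedDeriv j (by exact_mod_cast hjd)).continuousOn))
    continuousOn_const) ?_
  exact ContinuousOn.zpow₀ ((oscP_continuous A B).continuousOn) _
    (fun x hx => Or.inl (oscP_ne A B x hx))

lemma oscF_deriv_step (A B : ℝ) {m : ℝ → ℂ} (d : ℕ)
    (hm : ContDiff ℝ ((d + 2 : ℕ) : ℕ) m) (k : ℕ) (hk : k ≤ d) (x : ℝ)
    (hx : 2*A*x + B ≠ 0) :
    HasDerivAt (fun y => oscF A B m k y / oscP A B y) (oscF A B m (k+1) x) x := by
  obtain ⟨c, _, _, hrep⟩ := oscF_rep A B m d hm k hk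
  set C : ℂ := ((2*A:ℝ):ℂ) * Complex.I with hC_def
  have hPne : oscP A B x ≠ 0 := oscP_ne A B x hx
  set g : ℝ → ℂ := fun y => ∑ j ∈ Finset.range (d+1),
    ((c j : ℝ) : ℂ) * iteratedDeriv j m y * C^(k-j) * (oscP A B y)^((j:ℤ) - 2*(k:ℤ) - 1)
    with hg_def
  have heq : (fun y => oscF A B m k y / oscP A B y) =ᶠ[nhds x] g := by
    filter_upwards [(oscU_open A B).mem_nhds hx] with y hy
    have hPy : oscP A B y ≠ 0 := oscP_ne A B y hy
    rw [hrep y hy, Finset.sum_div]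
    apply Finset.sum_congr rfl
    intro j _
    rw [zpow_sub_one₀ hPy ((j:ℤ) - 2*(k:ℤ)), div_eq_mul_inv]
    ring
  have hder : ∀ j ∈ Finset.range (d+1),
      HasDerivAt (fun y => ((c j : ℝ) : ℂ) * iteratedDeriv j m y * C^(k-j)
          * (oscP A B y)^((j:ℤ) - 2*(k:ℤ) - 1))
        (((c j : ℝ) : ℂ) * iteratedDeriv (j+1) m x * C^(k-j)
            * (oscP A B x)^((j:ℤ) - 2*(k:ℤ) - 1)
          + (((c j : ℝ) : ℂ) * iteratedDeriv j m x * C^(k-j))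
            * ((((j:ℤ) - 2*(k:ℤ) - 1 : ℤ) : ℂ) * (oscP A B x)^((j:ℤ) - 2*(k:ℤ) - 1 - 1) * C)) x := by
    intro j hj
    have hjd : j ≤ d := by
      have := Finset.mem_range.mp hj; omega
    have h1 : HasDerivAt (iteratedDeriv j m) (iteratedDeriv (j+1) m x) x := by
      rw [iteratedDeriv_succ]
      apply hasDerivAt_deriv_iff.mpr
      exact (hm.differentiable_iteratedDeriv j (by exact_mod_cast Nat.lt_of_le_of_lt hjd (by omega))) x
    have h2 : HasDerivAt (fun y => (oscP A B y)^((j:ℤ) - 2*(k:ℤ) - 1))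
        ((((j:ℤ) - 2*(k:ℤ) - 1 : ℤ) : ℂ) * (oscP A B x)^((j:ℤ) - 2*(k:ℤ) - 1 - 1) * C) x := by
      have := (hasDerivAt_zpow ((j:ℤ) - 2*(k:ℤ) - 1) (oscP A B x) (Or.inl hPne)).comp
        x (oscP_hasDerivAt A B x)
      simpa [hC_def, mul_comm, mul_assoc, mul_left_comm, Function.comp_def] using this
    exact ((h1.const_mul ((c j : ℝ) : ℂ)).mul_const (C^(k-j))).mul h2
  have hg : HasDerivAt g _ x := HasDerivAt.fun_sum hder
  have hdiff : DifferentiableAt ℝ (fun y => oscF A B m k y / oscP A B y) x :=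
    (heq.differentiableAt_iff).mpr hg.differentiableAt
  have hFdef : oscF A B m (k+1) x = deriv (fun y => oscF A B m k y / oscP A B y) x := rfl
  rw [hFdef]
  exact hasDerivAt_deriv_iff.mpr hdiff

lemma osc_chain (A B a b : ℝ) (d : ℕ) {m : ℝ → ℂ}
    (hm : ContDiff ℝ ((d + 2 : ℕ) : ℕ) m) (hab : a ≤ b)
    (hU : ∀ x ∈ Set.Icc a b, 2*A*x + B ≠ 0)
    (hvan : ∀ j, j ≤ d → iteratedDeriv j m a = 0 ∧ iteratedDeriv j m b = 0) :
    ∀ k, k ≤ d → ‖∫ x in a..b, oscE A B x * m x‖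
      = ‖∫ x in a..b, oscE A B x * oscF A B m k x‖ := by
  intro k
  induction k with
  | zero => intro _; rfl
  | succ k ih =>
    intro hk1
    have hk : k ≤ d := by omega
    have huIcc : Set.uIcc a b = Set.Icc a b := Set.uIcc_of_le hab
    have hsub : Set.Icc a b ⊆ {y : ℝ | 2*A*y + B ≠ 0} := fun x hx => hU x hx
    set u : ℝ → ℂ := fun y => oscF A B m k y / oscP A B y with hu_def
    have hu : ∀ x ∈ Set.uIcc a b, HasDerivAt u (oscF A B m (k+1) x) x := by
      intro x hx
      rw [huIcc] at hx
      exact oscF_deriv_step A B d hm k hk x (hU x hx)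
    have hcontk : ContinuousOn (oscF A B m k) (Set.uIcc a b) := by
      rw [huIcc]; exact (oscF_continuousOn A B d hm k hk).mono hsub
    have hcontk1 : ContinuousOn (oscF A B m (k+1)) (Set.uIcc a b) := by
      rw [huIcc]; exact (oscF_continuousOn A B d hm (k+1) hk1).mono hsub
    have hibp := osc_ibp A B a b u (oscF A B m (k+1)) hu hcontk1
    -- boundary values vanish
    have hFzero : ∀ y : ℝ, y ∈ Set.Icc a b → (∀ j, j ≤ d → iteratedDeriv j m y = 0) →
        oscF A B m k y = 0 := by
      intro y hy hvany
      obtain ⟨c, _, _, hrep⟩ := oscF_rep A B m d hm k hk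
      rw [hrep y (hU y hy)]
      apply Finset.sum_eq_zero
      intro j hj
      rw [hvany j (by have := Finset.mem_range.mp hj; omega)]
      ring
    have hua : u a = 0 := by
      rw [hu_def]
      simp only []
      rw [hFzero a (Set.left_mem_Icc.mpr hab) (fun j hj => (hvan j hj).1), zero_div]
    have hub : u b = 0 := by
      rw [hu_def]
      simp only []
      rw [hFzero b (Set.right_mem_Icc.mpr hab) (fun j hj => (hvan j hj).2), zero_div]
    rw [hua, hub, mul_zero, mul_zero, sub_zero] at hibp
    have hcong : Set.EqOn (fun x => oscE A B x * (oscP A B x * u x) + oscE A B x * oscF A B m (k+1) x)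
        (fun x => oscE A B x * oscF A B m k x + oscE A B x * oscF A B m (k+1) x) (Set.uIcc a b) := by
      intro x hx
      rw [huIcc] at hx
      simp only [hu_def]
      rw [mul_div_cancel₀ _ (oscP_ne A B x (hU x hx))]
    rw [intervalIntegral.integral_congr hcong] at hibp
    have hiEk : IntervalIntegrable (fun x => oscE A B x * oscF A B m k x) MeasureTheory.volume a b :=
      ContinuousOn.intervalIntegrable (((oscE_continuous A B).continuousOn).mul hcontk)
    have hiEk1 : IntervalIntegrable (fun x => oscE A B x * oscF A B m (k+1) x) MeasureTheory.volume a b :=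
      ContinuousOn.intervalIntegrable (((oscE_continuous A B).continuousOn).mul hcontk1)
    rw [intervalIntegral.integral_add hiEk hiEk1] at hibp
    have hneg : (∫ x in a..b, oscE A B x * oscF A B m (k+1) x)
        = -(∫ x in a..b, oscE A B x * oscF A B m k x) := by
      linear_combination hibp
    rw [ih hk, hneg, norm_neg]

lemma osc_interval_d (A B a b ρ : ℝ) (d : ℕ) {m : ℝ → ℂ}
    (hm : ContDiff ℝ ((d + 2 : ℕ) : ℕ) m)
    (hmb : ∀ α : ℕ, α ≤ d + 2 → ∀ l : ℝ, ‖iteratedDeriv α m l‖ ≤ 1)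
    (hab : a ≤ b) (hρ : 0 < ρ)
    (hlow : ∀ x ∈ Set.Icc a b, ρ ≤ |2*A*x + B|) (hA4 : 2*|A| ≤ 4*ρ)
    (hvan : ∀ j, j ≤ d → iteratedDeriv j m a = 0 ∧ iteratedDeriv j m b = 0) :
    ‖∫ x in a..b, oscE A B x * m x‖
      ≤ ((d:ℝ)+1) * ((2*(d:ℝ)+2)^d * 4^d / ρ^d) * (b - a) := by
  have hU : ∀ x ∈ Set.Icc a b, 2*A*x + B ≠ 0 := by
    intro x hx h0
    have := hlow x hx
    rw [h0] at this
    simp at this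
    linarith
  rw [osc_chain A B a b d hm hab hU hvan d le_rfl]
  have hbd : ∀ x ∈ Set.uIoc a b, ‖oscE A B x * oscF A B m d x‖
      ≤ ((d:ℝ)+1) * ((2*(d:ℝ)+2)^d * 4^d / ρ^d) := by
    intro x hx
    rw [Set.uIoc_of_le hab] at hx
    have hx' : x ∈ Set.Icc a b := ⟨le_of_lt hx.1, hx.2⟩
    rw [norm_mul, oscE_norm, one_mul]
    exact oscF_norm_bound A B ρ d d x hm hmb hρ (hlow x hx') hA4 le_rfl
  calc ‖∫ x in a..b, oscE A B x * oscF A B m d x‖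
      ≤ ((d:ℝ)+1) * ((2*(d:ℝ)+2)^d * 4^d / ρ^d) * |b - a| :=
        intervalIntegral.norm_integral_le_of_norm_le_const hbd
    _ = ((d:ℝ)+1) * ((2*(d:ℝ)+2)^d * 4^d / ρ^d) * (b - a) := by
        rw [_root_.abs_of_nonneg (by linarith : (0:ℝ) ≤ b - a)]

lemma osc_lower_phase (A B x : ℝ) (hx1 : 1/2 ≤ |x|) (hx2 : |x| ≤ 2)
    (hcase : |A| < |B| / 10 ∨ |A| > 10 * |B|) :
    (|A| + |B|) / 2 ≤ |2*A*x + B| := by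
  have t1 : |B| ≤ |2*A*x + B| + |2*A*x| := by
    calc |B| = |(2*A*x + B) - 2*A*x| := by ring_nf
      _ ≤ |2*A*x + B| + |2*A*x| := abs_sub _ _
  have t2 : |2*A*x| ≤ |2*A*x + B| + |B| := by
    calc |2*A*x| = |(2*A*x + B) - B| := by ring_nf
      _ ≤ |2*A*x + B| + |B| := abs_sub _ _
  have e1 : |2*A*x| = 2 * |A| * |x| := by
    rw [abs_mul, abs_mul, _root_.abs_two]
  have hA0 : 0 ≤ |A| := abs_nonneg A
  have hB0 : 0 ≤ |B| := abs_nonneg B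
  rcases hcase with h | h
  · -- |A| small : phase dominated by B
    have : |2*A*x| ≤ 4 * |A| := by
      rw [e1]
      nlinarith
    linarith
  · -- |A| large : phase dominated by A
    have : |A| ≤ 2 * |A| * |x| := by nlinarith
    rw [e1] at t2
    linarith

lemma osc_case2 (d : ℕ) (A B : ℝ) {m : ℝ → ℂ}
    (hm : ContDiff ℝ ((d + 2 : ℕ) : ℕ) m)
    (hsupp : Function.support m ⊆ oscS)
    (hmb : ∀ α : ℕ, α ≤ d + 2 → ∀ l : ℝ, ‖iteratedDeriv α m l‖ ≤ 1)
    (hcase : |A| < |B| / 10 ∨ |A| > 10 * |B|) :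
    ‖∫ x, oscE A B x * m x‖
      ≤ (3 * 2^d + 3*((d:ℝ)+1) * (2*(d:ℝ)+2)^d * 16^d) * (1 + |A| + |B|) ^ (-(d:ℝ)) := by
  have hm0 : ∀ x, ‖m x‖ ≤ 1 := by
    intro x
    have := hmb 0 (by omega) x
    simpa [iteratedDeriv_zero] using this
  have hmc : Continuous m := hm.continuous
  set s := |A| + |B| with hs_def
  have hA0 : 0 ≤ |A| := abs_nonneg A
  have hB0 : 0 ≤ |B| := abs_nonneg B
  have hspos : 0 < s := by
    rw [hs_def]
    rcases hcase with h | h <;> nlinarith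
  set ρ := s / 2 with hρ_def
  have hρ : 0 < ρ := by positivity
  have hA4 : 2*|A| ≤ 4*ρ := by rw [hρ_def, hs_def]; linarith
  have hvanish : ∀ j : ℕ, j ≤ d + 2 → ∀ x : ℝ,
      (x ≤ -2 ∨ (-1/2 ≤ x ∧ x ≤ 1/2) ∨ 2 ≤ x) → iteratedDeriv j m x = 0 :=
    fun j hj => osc_vanish (n := d+2) hm hsupp (j := j) hj
  -- the two intervals
  have hI1 : ‖∫ x in (-2:ℝ)..(-1/2:ℝ), oscE A B x * m x‖
      ≤ ((d:ℝ)+1) * ((2*(d:ℝ)+2)^d * 4^d / ρ^d) * (3/2 : ℝ) := by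
    have := osc_interval_d A B (-2) (-1/2) ρ d hm hmb (by norm_num) hρ
      (fun x hx => by
        apply osc_lower_phase A B x ?_ ?_ hcase
        · rw [le_abs]; right; linarith [hx.2]
        · rw [abs_le]; constructor <;> [linarith [hx.1]; linarith [hx.2]])
      hA4
      (fun j hj => ⟨hvanish j (by omega) (-2) (Or.inl le_rfl),
        hvanish j (by omega) (-1/2) (Or.inr (Or.inl (by norm_num)))⟩)
    convert this using 2
    norm_num
  have hI2 : ‖∫ x in (1/2:ℝ)..(2:ℝ), oscE A B x * m x‖
      ≤ ((d:ℝ)+1) * ((2*(d:ℝ)+2)^d * 4^d / ρ^d) * (3/2 : ℝ) := by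
    have := osc_interval_d A B (1/2) 2 ρ d hm hmb (by norm_num) hρ
      (fun x hx => by
        apply osc_lower_phase A B x ?_ ?_ hcase
        · rw [le_abs]; left; linarith [hx.1]
        · rw [abs_le]; constructor <;> [linarith [hx.1]; linarith [hx.2]])
      hA4
      (fun j hj => ⟨hvanish j (by omega) (1/2) (Or.inr (Or.inl (by norm_num))),
        hvanish j (by omega) 2 (Or.inr (Or.inr le_rfl))⟩)
    convert this using 2
    norm_num
  have hsplit := osc_split2 A B (n := d+2) hm hsupp
  set K : ℝ := ((d:ℝ)+1) * (2*(d:ℝ)+2)^d * 4^d with hK_def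
  have hKpos : 0 < K := by rw [hK_def]; positivity
  have hmain : ‖∫ x, oscE A B x * m x‖ ≤ 3 * K * 2^d / s^d := by
    have h1 : ‖∫ x, oscE A B x * m x‖
        ≤ ((d:ℝ)+1) * ((2*(d:ℝ)+2)^d * 4^d / ρ^d) * (3/2 : ℝ) * 2 := by
      rw [hsplit]
      have := norm_add_le (∫ x in (-2:ℝ)..(-1/2:ℝ), oscE A B x * m x)
        (∫ x in (1/2:ℝ)..(2:ℝ), oscE A B x * m x)
      linarith
    have hρd : ρ^d = s^d / 2^d := by rw [hρ_def, div_pow]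
    calc ‖∫ x, oscE A B x * m x‖
        ≤ ((d:ℝ)+1) * ((2*(d:ℝ)+2)^d * 4^d / ρ^d) * (3/2 : ℝ) * 2 := h1
      _ = 3 * K * 2^d / s^d := by
          rw [hρd, hK_def]
          have h2d : (0:ℝ) < 2^d := by positivity
          have hsd : (0:ℝ) < s^d := by positivity
          field_simp
  -- convert to (1+s)^(-d)
  have hone : (0:ℝ) < 1 + s := by linarith
  have hrpow : (1 + s) ^ (-(d:ℝ)) = ((1+s)^d)⁻¹ := by
    rw [← Real.rpow_natCast (1+s) d, ← Real.rpow_neg (le_of_lt hone)]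
  have htriv := osc_trivial A B hmc hsupp hm0
  rw [show 1 + |A| + |B| = 1 + s by rw [hs_def]; ring, hrpow]
  have hpowpos : (0:ℝ) < (1+s)^d := by positivity
  rcases le_or_gt s 1 with hs1 | hs1
  · -- trivial bound
    have hps : (1+s)^d ≤ 2^d := pow_le_pow_left₀ (by linarith) (by linarith) d
    have h2 : (3:ℝ) * 2^d ≤ (3 * 2^d + 3*((d:ℝ)+1) * (2*(d:ℝ)+2)^d * 16^d) := by
      have : (0:ℝ) ≤ 3*((d:ℝ)+1) * (2*(d:ℝ)+2)^d * 16^d := by positivity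
      linarith
    calc ‖∫ x, oscE A B x * m x‖ ≤ 3 := htriv
      _ ≤ 3 * 2^d * ((1+s)^d)⁻¹ := by
          rw [le_mul_inv_iff₀ hpowpos]
          calc (3:ℝ) * (1+s)^d ≤ 3 * 2^d := by
                apply mul_le_mul_of_nonneg_left hps (by norm_num)
            _ = 3 * 2^d := rfl
      _ ≤ (3 * 2^d + 3*((d:ℝ)+1) * (2*(d:ℝ)+2)^d * 16^d) * ((1+s)^d)⁻¹ := by
          apply mul_le_mul_of_nonneg_right h2 (by positivity)
  · -- decay bound
    have hps : (1+s)^d ≤ 2^d * s^d := by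
      rw [← mul_pow]
      exact pow_le_pow_left₀ (by linarith) (by linarith) d
    have hsd : (0:ℝ) < s^d := by positivity
    calc ‖∫ x, oscE A B x * m x‖ ≤ 3 * K * 2^d / s^d := hmain
      _ ≤ 3 * K * 4^d * ((1+s)^d)⁻¹ := by
          have key : (3:ℝ)*K*2^d * (1+s)^d ≤ 3*K*4^d * s^d := by
            calc (3:ℝ)*K*2^d * (1+s)^d ≤ 3*K*2^d * (2^d * s^d) := by
                  apply mul_le_mul_of_nonneg_left hps (by positivity)
              _ = 3*K*4^d*s^d := by
                  rw [show (4:ℝ)^d = 2^d*2^d by rw [← mul_pow]; norm_num]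
                  ring
          rw [show (3:ℝ)*K*4^d * ((1+s)^d)⁻¹ = (3*K*4^d)/((1+s)^d) from (div_eq_mul_inv _ _).symm,
            div_le_div_iff₀ hsd hpowpos]
          exact key
      _ ≤ (3 * 2^d + 3*((d:ℝ)+1) * (2*(d:ℝ)+2)^d * 16^d) * ((1+s)^d)⁻¹ := by
          apply mul_le_mul_of_nonneg_right ?_ (by positivity)
          rw [hK_def]
          have h1 : (0:ℝ) ≤ 3 * 2^d := by positivity
          have : ((d:ℝ)+1) * (2*(d:ℝ)+2)^d * 4^d * 4^d = ((d:ℝ)+1) * (2*(d:ℝ)+2)^d * 16^d := by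
            rw [mul_assoc, ← mul_pow]
            norm_num
          nlinarith [this]

/-- For every `d ≥ 1` there is a constant `C` (depending only on `d`)
such that for every `(d+2)`-times continuously differentiable `m : ℝ → ℂ` supported
in `[-2,-1/2] ∪ [1/2,2]` with `|m^{(α)}| ≤ 1` for `0 ≤ α ≤ d+2`, and all reals
`A`, `B`:
(i) if `B ≠ 0` and `1/10 ≤ |A/B| ≤ 10` then
    `|∫ e^{i(Aλ²+Bλ)} m(λ) dλ| ≤ C (1+|A|)^{-1/2}`;
(ii) if `|A| < |B|/10` or `|A| > 10|B|` then
    `|∫ e^{i(Aλ²+Bλ)} m(λ) dλ| ≤ C (1+|A|+|B|)^{-d}`. -/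
theorem oscillatory_bound_Ke30 (d : ℕ) (hd : 1 ≤ d) :
    ∃ C : ℝ, ∀ m : ℝ → ℂ, ContDiff ℝ (d + 2 : ℕ) m →
      (Function.support m ⊆ Set.Icc (-2 : ℝ) (-1/2) ∪ Set.Icc (1/2 : ℝ) 2) →
      (∀ α : ℕ, α ≤ d + 2 → ∀ l : ℝ, ‖iteratedDeriv α m l‖ ≤ 1) →
      ∀ A B : ℝ,
        ((B ≠ 0 → 1/10 ≤ |A / B| → |A / B| ≤ 10 →
            ‖∫ l : ℝ, Complex.exp (Complex.I * ((A : ℂ) * (l : ℂ) ^ 2 + (B : ℂ) * (l : ℂ))) *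
                m l‖ ≤ C * (1 + |A|) ^ (-(1 : ℝ) / 2)) ∧
         ((|A| < |B| / 10 ∨ |A| > 10 * |B|) →
            ‖∫ l : ℝ, Complex.exp (Complex.I * ((A : ℂ) * (l : ℂ) ^ 2 + (B : ℂ) * (l : ℂ))) *
                m l‖ ≤ C * (1 + |A| + |B|) ^ (-(d : ℝ)))) := by
  refine ⟨30 + (3 * 2^d + 3*((d:ℝ)+1) * (2*(d:ℝ)+2)^d * 16^d), ?_⟩
  intro m hm hsupp hb A B
  have hsupp' : Function.support m ⊆ oscS := hsupp
  have hC2 : (0:ℝ) ≤ 3 * 2^d + 3*((d:ℝ)+1) * (2*(d:ℝ)+2)^d * 16^d := by positivity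
  have heq : (∫ l : ℝ, Complex.exp (Complex.I * ((A : ℂ) * (l : ℂ) ^ 2 + (B : ℂ) * (l : ℂ))) * m l)
      = ∫ x, oscE A B x * m x := rfl
  constructor
  · intro hB h1 h2
    have hmain := osc_case1 d A B hm hsupp' hb hB h1 h2
    have hpos : (0:ℝ) ≤ (1 + |A|) ^ (-(1:ℝ)/2) := Real.rpow_nonneg (by positivity) _
    rw [heq]
    have h3 : (0:ℝ) ≤ (3 * 2^d + 3*((d:ℝ)+1) * (2*(d:ℝ)+2)^d * 16^d) * (1 + |A|) ^ (-(1:ℝ)/2) :=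
      mul_nonneg hC2 hpos
    have hexp : (-(1:ℝ)/2) = (-(1:ℝ))/2 := by norm_num
    calc ‖∫ x, oscE A B x * m x‖ ≤ 30 * (1 + |A|) ^ (-(1:ℝ)/2) := hmain
      _ ≤ (30 + (3 * 2^d + 3*((d:ℝ)+1) * (2*(d:ℝ)+2)^d * 16^d)) * (1 + |A|) ^ (-(1:ℝ)/2) := by
          rw [add_mul]
          linarith
  · intro hcase
    have hmain := osc_case2 d A B hm hsupp' hb hcase
    have hpos : (0:ℝ) ≤ (1 + |A| + |B|) ^ (-(d:ℝ)) := Real.rpow_nonneg (by positivity) _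
    rw [heq]
    calc ‖∫ x, oscE A B x * m x‖
        ≤ (3 * 2^d + 3*((d:ℝ)+1) * (2*(d:ℝ)+2)^d * 16^d) * (1 + |A| + |B|) ^ (-(d:ℝ)) := hmain
      _ ≤ (30 + (3 * 2^d + 3*((d:ℝ)+1) * (2*(d:ℝ)+2)^d * 16^d)) * (1 + |A| + |B|) ^ (-(d:ℝ)) := by
          rw [add_mul]
          nlinarith
end

section
/- For every integer d ≥ 2 there exist a constant C > 0 and a function ã : [0,∞) → ℝ, continuous on [0,∞) and twice continuously differentiable on (0,∞), with the following properties: ã(0) = 0; ã'(r) → 0 as r → 0+; ã(r) ≥ 0, ã'(r) ≥ 0, and ã''(r) ≥ 0 for all r > 0; ã'(r) ≤ C min(1, r) for all r > 0; and ã''(r) + (d−1) (cosh r / sinh r) ã'(r) = 1 for all r > 0. -/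
open Filter

section RadialAux
open MeasureTheory intervalIntegral

noncomputable def Fint (n : ℕ) (r : ℝ) : ℝ := ∫ t in (0:ℝ)..r, Real.sinh t ^ n

noncomputable def gfun (n : ℕ) (r : ℝ) : ℝ := Fint n r / Real.sinh r ^ n

noncomputable def afun (n : ℕ) (r : ℝ) : ℝ := ∫ t in (0:ℝ)..r, gfun n t

lemma sinhPow_intInt (n : ℕ) (a b : ℝ) :
    IntervalIntegrable (fun t => Real.sinh t ^ n) volume a b :=
  (Real.continuous_sinh.pow n).intervalIntegrable a b

lemma hF_deriv (n : ℕ) (r : ℝ) : HasDerivAt (Fint n) (Real.sinh r ^ n) r :=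
  integral_hasDerivAt_right (sinhPow_intInt n 0 r)
    ((Real.continuous_sinh.pow n).aestronglyMeasurable.stronglyMeasurableAtFilter)
    ((Real.continuous_sinh.pow n).continuousAt)

lemma hF_nonneg (n : ℕ) {r : ℝ} (hr : 0 ≤ r) : 0 ≤ Fint n r :=
  intervalIntegral.integral_nonneg hr fun t ht => pow_nonneg (Real.sinh_nonneg_iff.2 ht.1) n

lemma hF_le (n : ℕ) {r : ℝ} (hr : 0 ≤ r) : Fint n r ≤ r * Real.sinh r ^ n := by
  calc Fint n r ≤ ∫ _t in (0:ℝ)..r, Real.sinh r ^ n := by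
        refine intervalIntegral.integral_mono_on hr (sinhPow_intInt n 0 r)
          (intervalIntegrable_const) (fun t ht => ?_)
        exact pow_le_pow_left₀ (Real.sinh_nonneg_iff.2 ht.1) (Real.sinh_le_sinh.2 ht.2) n
    _ = r * Real.sinh r ^ n := by simp

lemma hnF (m : ℕ) {r : ℝ} (hr : 0 ≤ r) :
    ((m:ℝ) + 1) * Fint (m+1) r ≤ Real.sinh r ^ (m+1) := by
  have h1 : ((m:ℝ) + 1) * Fint (m+1) r
      = ∫ t in (0:ℝ)..r, ((m:ℝ) + 1) * Real.sinh t ^ (m+1) := by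
    rw [Fint, ← intervalIntegral.integral_const_mul]
  have hderiv : ∀ t ∈ Set.uIcc (0:ℝ) r,
      HasDerivAt (fun u => Real.sinh u ^ (m+1))
        (((m:ℝ) + 1) * Real.sinh t ^ m * Real.cosh t) t := by
    intro t _
    have := (Real.hasDerivAt_sinh t).pow (m+1)
    refine this.congr_deriv ?_
    simp
  have h2 : Real.sinh r ^ (m+1)
      = ∫ t in (0:ℝ)..r, ((m:ℝ) + 1) * Real.sinh t ^ m * Real.cosh t := by
    rw [intervalIntegral.integral_eq_sub_of_hasDerivAt hderiv
      (Continuous.intervalIntegrable (by continuity) 0 r)]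
    simp
  rw [h1, h2]
  refine intervalIntegral.integral_mono_on hr
    (Continuous.intervalIntegrable (by continuity) 0 r)
    (Continuous.intervalIntegrable (by continuity) 0 r) (fun t ht => ?_)
  have hs : 0 ≤ Real.sinh t := Real.sinh_nonneg_iff.2 ht.1
  have hsc : Real.sinh t ≤ Real.cosh t := (Real.sinh_lt_cosh t).le
  have : Real.sinh t ^ (m+1) ≤ Real.sinh t ^ m * Real.cosh t := by
    rw [pow_succ]
    exact mul_le_mul_of_nonneg_left hsc (pow_nonneg hs m)
  nlinarith [this, (Nat.cast_nonneg m : (0:ℝ) ≤ m)]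

lemma hcoshF (m : ℕ) {r : ℝ} (hr : 0 ≤ r) :
    ((m:ℝ) + 1) * Real.cosh r * Fint (m+1) r ≤ Real.sinh r ^ (m+2) := by
  set φ : ℝ → ℝ := fun x => Real.sinh x ^ (m+2) - ((m:ℝ)+1) * (Real.cosh x * Fint (m+1) x)
    with hφdef
  have hφ : ∀ x : ℝ, HasDerivAt φ
      (((m:ℝ)+2) * Real.sinh x ^ (m+1) * Real.cosh x
        - ((m:ℝ)+1) * (Real.sinh x * Fint (m+1) x + Real.cosh x * Real.sinh x ^ (m+1))) x := by
    intro x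
    have h1 : HasDerivAt (fun u => Real.sinh u ^ (m+2))
        (((m:ℝ)+2) * Real.sinh x ^ (m+1) * Real.cosh x) x := by
      have := (Real.hasDerivAt_sinh x).pow (m+2)
      refine this.congr_deriv ?_
      push_cast
      ring_nf
    have h2 : HasDerivAt (fun u => Real.cosh u * Fint (m+1) u)
        (Real.sinh x * Fint (m+1) x + Real.cosh x * Real.sinh x ^ (m+1)) x :=
      (Real.hasDerivAt_cosh x).mul (hF_deriv (m+1) x)
    exact h1.sub (h2.const_mul _)
  have hmono : MonotoneOn φ (Set.Ici 0) := by
    refine monotoneOn_of_deriv_nonneg (convex_Ici 0)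
      (fun x _ => ((hφ x).continuousAt).continuousWithinAt)
      (fun x _ => ((hφ x).differentiableAt).differentiableWithinAt) (fun x hx => ?_)
    rw [interior_Ici, Set.mem_Ioi] at hx
    rw [(hφ x).deriv]
    have hs : 0 ≤ Real.sinh x := Real.sinh_nonneg_iff.2 hx.le
    have hsc : Real.sinh x ≤ Real.cosh x := (Real.sinh_lt_cosh x).le
    have hn := hnF m hx.le
    have hspow : 0 ≤ Real.sinh x ^ (m+1) := pow_nonneg hs _
    nlinarith [mul_le_mul_of_nonneg_left hn hs, mul_le_mul_of_nonneg_right hsc hspow]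
  have h0 : φ 0 = 0 := by simp [hφdef, Fint]
  have := hmono (Set.self_mem_Ici) hr hr
  rw [h0] at this
  simp only [hφdef] at this
  linarith

lemma hg_deriv (m : ℕ) {r : ℝ} (hr : 0 < r) :
    HasDerivAt (gfun (m+1))
      (1 - ((m:ℝ)+1) * (Real.cosh r / Real.sinh r) * gfun (m+1) r) r := by
  have hs : 0 < Real.sinh r := Real.sinh_pos_iff.2 hr
  have hsp : Real.sinh r ^ (m+1) ≠ 0 := (pow_pos hs _).ne'
  have hd : HasDerivAt (fun u => Real.sinh u ^ (m+1))
      (((m:ℝ)+1) * Real.sinh r ^ m * Real.cosh r) r := by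
    refine ((Real.hasDerivAt_sinh r).pow (m+1)).congr_deriv ?_
    simp
  have := (hF_deriv (m+1) r).div hd hsp
  refine this.congr_deriv ?_
  rw [gfun]
  field_simp
  ring

lemma hg_nonneg (m : ℕ) {r : ℝ} (hr : 0 ≤ r) : 0 ≤ gfun (m+1) r :=
  div_nonneg (hF_nonneg _ hr) (pow_nonneg (Real.sinh_nonneg_iff.2 hr) _)

lemma hg_le_r (m : ℕ) {r : ℝ} (hr : 0 ≤ r) : gfun (m+1) r ≤ r := by
  rcases eq_or_lt_of_le hr with h | h
  · simp [gfun, Fint, ← h]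
  · have hs : 0 < Real.sinh r ^ (m+1) := pow_pos (Real.sinh_pos_iff.2 h) _
    rw [gfun, div_le_iff₀ hs]
    exact hF_le _ hr

lemma hg_le_one (m : ℕ) {r : ℝ} (hr : 0 < r) : gfun (m+1) r ≤ 1 := by
  have hs : 0 < Real.sinh r ^ (m+1) := pow_pos (Real.sinh_pos_iff.2 hr) _
  rw [gfun, div_le_one hs]
  have h1 : Fint (m+1) r ≤ ((m:ℝ)+1) * Fint (m+1) r := by
    nlinarith [hF_nonneg (m+1) hr.le, (Nat.cast_nonneg m : (0:ℝ) ≤ m)]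
  exact h1.trans (hnF m hr.le)

lemma hg_tendsto (m : ℕ) :
    Filter.Tendsto (gfun (m+1)) (nhdsWithin 0 (Set.Ici 0)) (nhds 0) := by
  have h1 : ∀ᶠ x in nhdsWithin (0:ℝ) (Set.Ici 0), 0 ≤ gfun (m+1) x := by
    filter_upwards [self_mem_nhdsWithin] with x hx
    exact hg_nonneg m hx
  have h2 : ∀ᶠ x in nhdsWithin (0:ℝ) (Set.Ici 0), gfun (m+1) x ≤ id x := by
    filter_upwards [self_mem_nhdsWithin] with x hx
    exact hg_le_r m hx
  have h3 : Filter.Tendsto (id : ℝ → ℝ) (nhdsWithin 0 (Set.Ici 0)) (nhds 0) :=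
    Filter.tendsto_id.mono_left nhdsWithin_le_nhds
  exact squeeze_zero' h1 h2 h3

lemma hg_contOn (m : ℕ) : ContinuousOn (gfun (m+1)) (Set.Ici 0) := by
  intro x hx
  rcases eq_or_lt_of_le (Set.mem_Ici.mp hx) with h | h
  · have h0 : gfun (m+1) x = 0 := by simp [gfun, Fint, ← h]
    rw [ContinuousWithinAt, h0, ← h]
    exact hg_tendsto m
  · exact ((hg_deriv m h).continuousAt).continuousWithinAt

lemma hF_cont (n : ℕ) : Continuous (Fint n) := by
  have h : Differentiable ℝ (Fint n) := fun r => (hF_deriv n r).differentiableAt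
  exact h.continuous

lemma hg_meas (n : ℕ) : Measurable (gfun n) :=
  (hF_cont n).measurable.div ((Real.continuous_sinh.pow n).measurable)

lemma hg_intInt (m : ℕ) {r : ℝ} (hr : 0 ≤ r) :
    IntervalIntegrable (gfun (m+1)) volume 0 r := by
  apply ContinuousOn.intervalIntegrable
  apply (hg_contOn m).mono
  rw [Set.uIcc_of_le hr]
  exact Set.Icc_subset_Ici_self

lemma ha_deriv (m : ℕ) {r : ℝ} (hr : 0 < r) :
    HasDerivAt (afun (m+1)) (gfun (m+1) r) r :=
  integral_hasDerivAt_right (hg_intInt m hr.le)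
    ((hg_meas (m+1)).stronglyMeasurable.aestronglyMeasurable.stronglyMeasurableAtFilter)
    (hg_deriv m hr).continuousAt

lemma ha_nonneg (m : ℕ) {r : ℝ} (hr : 0 ≤ r) : 0 ≤ afun (m+1) r :=
  intervalIntegral.integral_nonneg hr fun t ht => hg_nonneg m ht.1

lemma ha_le (m : ℕ) {r : ℝ} (hr : 0 ≤ r) : afun (m+1) r ≤ r * r := by
  calc afun (m+1) r ≤ ∫ _t in (0:ℝ)..r, r := by
        refine intervalIntegral.integral_mono_on hr (hg_intInt m hr)
          intervalIntegrable_const (fun t ht => (hg_le_r m ht.1).trans ht.2)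
    _ = r * r := by simp
end RadialAux

open MeasureTheory intervalIntegral in
/-- For every `d ≥ 2` there exist `C > 0` and a function
`ã : [0,∞) → ℝ`, continuous on `[0,∞)` and twice continuously differentiable on
`(0,∞)`, with `ã(0) = 0`, `ã'(r) → 0` as `r → 0+`, `ã, ã', ã'' ≥ 0` on `(0,∞)`,
`ã'(r) ≤ C min(1,r)` for `r > 0`, and
`ã''(r) + (d−1)(cosh r / sinh r) ã'(r) = 1` for all `r > 0`. -/
theorem exists_radial_a (d : ℕ) (hd : 2 ≤ d) :
    ∃ C : ℝ, 0 < C ∧ ∃ a : ℝ → ℝ,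
      ContinuousOn a (Set.Ici 0) ∧
      ContDiffOn ℝ 2 a (Set.Ioi 0) ∧
      a 0 = 0 ∧
      Tendsto (deriv a) (nhdsWithin 0 (Set.Ioi 0)) (nhds 0) ∧
      (∀ r : ℝ, 0 < r → 0 ≤ a r) ∧
      (∀ r : ℝ, 0 < r → 0 ≤ deriv a r) ∧
      (∀ r : ℝ, 0 < r → 0 ≤ deriv (deriv a) r) ∧
      (∀ r : ℝ, 0 < r → deriv a r ≤ C * min 1 r) ∧
      (∀ r : ℝ, 0 < r →
        deriv (deriv a) r + ((d : ℝ) - 1) * (Real.cosh r / Real.sinh r) * deriv a r = 1) := by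
  obtain ⟨m, rfl⟩ : ∃ m, d = m + 2 := ⟨d - 2, by omega⟩
  have hderiva : ∀ r : ℝ, 0 < r → deriv (afun (m+1)) r = gfun (m+1) r :=
    fun r hr => (ha_deriv m hr).deriv
  have heq : Set.EqOn (deriv (afun (m+1))) (gfun (m+1)) (Set.Ioi 0) :=
    fun r hr => hderiva r hr
  have hdd : ∀ r : ℝ, 0 < r → deriv (deriv (afun (m+1))) r
      = 1 - ((m:ℝ)+1) * (Real.cosh r / Real.sinh r) * gfun (m+1) r := by
    intro r hr
    have hev : deriv (afun (m+1)) =ᶠ[nhds r] gfun (m+1) := by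
      filter_upwards [isOpen_Ioi.mem_nhds hr] with x hx
      exact hderiva x hx
    rw [hev.deriv_eq, (hg_deriv m hr).deriv]
  have hddnn : ∀ r : ℝ, 0 < r →
      ((m:ℝ)+1) * (Real.cosh r / Real.sinh r) * gfun (m+1) r ≤ 1 := by
    intro r hr
    have hs : 0 < Real.sinh r := Real.sinh_pos_iff.2 hr
    have heq2 : ((m:ℝ)+1) * (Real.cosh r / Real.sinh r) * gfun (m+1) r
        = (((m:ℝ)+1) * Real.cosh r * Fint (m+1) r) / Real.sinh r ^ (m+2) := by
      rw [gfun]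
      field_simp
      ring_nf
    rw [heq2, div_le_one (pow_pos hs _)]
    exact hcoshF m hr.le
  refine ⟨1, one_pos, afun (m+1), ?_, ?_, ?_, ?_, ?_, ?_, ?_, ?_, ?_⟩
  · -- continuity on Ici 0
    intro x hx
    rcases eq_or_lt_of_le (Set.mem_Ici.mp hx) with h | h
    · have h0 : afun (m+1) x = 0 := by simp [afun, Fint, ← h]
      rw [ContinuousWithinAt, h0, ← h]
      have h1 : ∀ᶠ y in nhdsWithin (0:ℝ) (Set.Ici 0), 0 ≤ afun (m+1) y := by
        filter_upwards [self_mem_nhdsWithin] with y hy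
        exact ha_nonneg m hy
      have h2 : ∀ᶠ y in nhdsWithin (0:ℝ) (Set.Ici 0), afun (m+1) y ≤ y * y := by
        filter_upwards [self_mem_nhdsWithin] with y hy
        exact ha_le m hy
      have h3 : Tendsto (fun y : ℝ => y * y) (nhdsWithin 0 (Set.Ici 0)) (nhds 0) := by
        have := ((continuous_id.mul continuous_id).tendsto (0:ℝ)).mono_left
          (nhdsWithin_le_nhds (s := Set.Ici (0:ℝ)))
        simp only [Pi.mul_apply, id, mul_zero] at this
        exact this
      exact squeeze_zero' h1 h2 h3
    · exact (ha_deriv m h).continuousAt.continuousWithinAt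
  · -- C²
    rw [show (2 : WithTop ℕ∞) = 1 + 1 by norm_num,
      contDiffOn_succ_iff_deriv_of_isOpen isOpen_Ioi]
    refine ⟨fun x hx => (ha_deriv m hx).differentiableAt.differentiableWithinAt, by simp, ?_⟩
    have hg1 : ContDiffOn ℝ 1 (gfun (m+1)) (Set.Ioi 0) := by
      rw [show (1 : WithTop ℕ∞) = 0 + 1 by norm_num,
        contDiffOn_succ_iff_deriv_of_isOpen isOpen_Ioi]
      refine ⟨fun x hx => (hg_deriv m hx).differentiableAt.differentiableWithinAt, by simp, ?_⟩
      rw [contDiffOn_zero]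
      have heqg : Set.EqOn (deriv (gfun (m+1)))
          (fun x => 1 - ((m:ℝ)+1) * (Real.cosh x / Real.sinh x) * gfun (m+1) x)
          (Set.Ioi 0) := fun x hx => (hg_deriv m hx).deriv
      refine ContinuousOn.congr ?_ heqg
      refine continuousOn_const.sub (ContinuousOn.mul (continuousOn_const.mul ?_)
        ((hg_contOn m).mono Set.Ioi_subset_Ici_self))
      exact ContinuousOn.div Real.continuous_cosh.continuousOn
        Real.continuous_sinh.continuousOn
        (fun x hx => (Real.sinh_pos_iff.2 hx).ne')
    exact hg1.congr heq
  · simp [afun, Fint]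
  · have hgt : Tendsto (gfun (m+1)) (nhdsWithin 0 (Set.Ioi 0)) (nhds 0) :=
      (hg_tendsto m).mono_left (nhdsWithin_mono _ Set.Ioi_subset_Ici_self)
    refine hgt.congr' ?_
    filter_upwards [self_mem_nhdsWithin] with x hx
    exact (hderiva x hx).symm
  · exact fun r hr => ha_nonneg m hr.le
  · intro r hr
    rw [hderiva r hr]
    exact hg_nonneg m hr.le
  · intro r hr
    rw [hdd r hr]
    linarith [hddnn r hr]
  · intro r hr
    rw [hderiva r hr, one_mul]
    exact le_min (hg_le_one m hr) (hg_le_r m hr.le)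
  · intro r hr
    rw [hdd r hr, hderiva r hr]
    push_cast
    ring
end

section
/- For every integer d ≥ 2 and every real number r ≥ 0, one has (d−1) cosh(r) · ∫₀^r sinh(s)^{d−1} ds ≤ sinh(r)^d. -/
/-- For every integer `d ≥ 2` and every real `r ≥ 0`,
`(d−1) cosh(r) · ∫₀^r sinh(s)^{d−1} ds ≤ sinh(r)^d`. -/
theorem key_integral_inequality (d : ℕ) (hd : 2 ≤ d) (r : ℝ) (hr : 0 ≤ r) :
    ((d : ℝ) - 1) * Real.cosh r * (∫ s in (0 : ℝ)..r, Real.sinh s ^ (d - 1)) ≤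
      Real.sinh r ^ d := by
  set f : ℝ → ℝ := fun x => Real.sinh x ^ d / Real.cosh x -
      ((d : ℝ) - 1) * ∫ s in (0 : ℝ)..x, Real.sinh s ^ (d - 1) with hfdef
  have hcont : Continuous fun s : ℝ => Real.sinh s ^ (d - 1) := Real.continuous_sinh.pow _
  have hderiv : ∀ x : ℝ, HasDerivAt f (Real.sinh x ^ (d - 1) / Real.cosh x ^ 2) x := by
    intro x
    have hFx : HasDerivAt (fun x => ∫ s in (0 : ℝ)..x, Real.sinh s ^ (d - 1))
        (Real.sinh x ^ (d - 1)) x :=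
      (hcont.integral_hasStrictDerivAt 0 x).hasDerivAt
    have h1 : HasDerivAt (fun x => Real.sinh x ^ d)
        ((d : ℝ) * Real.sinh x ^ (d - 1) * Real.cosh x) x := by
      simpa using (Real.hasDerivAt_sinh x).fun_pow d
    have h2 : HasDerivAt Real.cosh (Real.sinh x) x := Real.hasDerivAt_cosh x
    have hc : Real.cosh x ≠ 0 := (Real.cosh_pos x).ne'
    have h3 := (h1.div h2 hc).sub (hFx.const_mul ((d : ℝ) - 1))
    have h3' : HasDerivAt f _ x := h3
    convert h3' using 1
    have hs : Real.sinh x ^ d = Real.sinh x ^ (d - 1) * Real.sinh x := by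
      rw [← pow_succ]
      congr 1
      omega
    have hcs : Real.cosh x ^ 2 - Real.sinh x ^ 2 = 1 := Real.cosh_sq_sub_sinh_sq x
    field_simp
    rw [hs]
    linear_combination (-(Real.sinh x ^ (d - 1))) * hcs
  have hmono : MonotoneOn f (Set.Ici (0 : ℝ)) := by
    apply monotoneOn_of_deriv_nonneg (convex_Ici 0)
    · exact fun x _ => ((hderiv x).differentiableAt.continuousAt).continuousWithinAt
    · exact fun x _ => ((hderiv x).differentiableAt.differentiableWithinAt)
    · intro x hx
      rw [(hderiv x).deriv]
      have hx0 : 0 < x := by simpa using hx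
      have : 0 ≤ Real.sinh x := (Real.sinh_pos_iff.2 hx0).le
      positivity
  have hf0 : f 0 = 0 := by
    simp [hfdef, Real.sinh_zero, zero_pow (by omega : d ≠ 0)]
  have hfr : 0 ≤ f r := by
    rw [← hf0]
    exact hmono (by simp) hr hr
  have hc : 0 < Real.cosh r := Real.cosh_pos r
  have key : ((d : ℝ) - 1) * ∫ s in (0 : ℝ)..r, Real.sinh s ^ (d - 1) ≤
      Real.sinh r ^ d / Real.cosh r := by
    simp only [hfdef] at hfr
    linarith
  calc ((d : ℝ) - 1) * Real.cosh r * (∫ s in (0 : ℝ)..r, Real.sinh s ^ (d - 1))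
      = Real.cosh r * (((d : ℝ) - 1) * ∫ s in (0 : ℝ)..r, Real.sinh s ^ (d - 1)) := by ring
    _ ≤ Real.cosh r * (Real.sinh r ^ d / Real.cosh r) := by
        exact mul_le_mul_of_nonneg_left key hc.le
    _ = Real.sinh r ^ d := by field_simp
end

section
/- For every integer d ≥ 2 there exists a constant C, depending only on d, such that for all r ≥ 0, ∫₀^π (cosh r − sinh r · cos θ)^{-(d-1)/2} (sin θ)^{d-2} dθ ≤ C e^{-(d-1)r/2} (1 + r). -/
open Real intervalIntegral

private lemma sin_half_lb {x : ℝ} (h0 : 0 ≤ x) (h1 : x ≤ 1) : x / 2 ≤ Real.sin x := by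
  rcases eq_or_lt_of_le h0 with h | h
  · simp [← h]
  · nlinarith [Real.sin_gt_sub_cube h, mul_nonneg h0 h0, sq_nonneg x]

private lemma ulb1 (r θ : ℝ) (hr : 0 ≤ r) :
    Real.exp (-r) ≤ Real.cosh r - Real.sinh r * Real.cos θ := by
  have h1 := Real.cosh_sub_sinh r
  have hs : 0 ≤ Real.sinh r := Real.sinh_nonneg_iff.mpr hr
  have hc := Real.cos_le_one θ
  nlinarith [mul_le_mul_of_nonneg_left hc hs]

private lemma u_pos (r θ : ℝ) (hr : 0 ≤ r) :
    0 < Real.cosh r - Real.sinh r * Real.cos θ :=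
  lt_of_lt_of_le (Real.exp_pos _) (ulb1 r θ hr)

private lemma ulb2 (r θ : ℝ) (hr : 0 ≤ r) (h0 : 0 ≤ θ) (h2 : θ ≤ Real.pi / 2) :
    Real.exp r * θ ^ 2 / 16 ≤ Real.cosh r - Real.sinh r * Real.cos θ := by
  have hcos : 0 ≤ Real.cos θ := Real.cos_nonneg_of_mem_Icc ⟨by linarith, h2⟩
  have hsc : Real.sinh r ≤ Real.cosh r := by
    nlinarith [Real.cosh_sub_sinh r, Real.exp_pos (-r)]
  have h1 : Real.sinh r * Real.cos θ ≤ Real.cosh r * Real.cos θ :=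
    mul_le_mul_of_nonneg_right hsc hcos
  have hup : Real.exp r / 2 ≤ Real.cosh r := by
    rw [Real.cosh_eq]; nlinarith [Real.exp_pos (-r)]
  have hpi4 : Real.pi ≤ 4 := Real.pi_le_four
  have hsin : θ / 4 ≤ Real.sin (θ / 2) := by
    have := sin_half_lb (x := θ / 2) (by linarith) (by linarith)
    linarith
  have hc2 : Real.cos θ = 1 - 2 * Real.sin (θ / 2) ^ 2 := by
    have hh := Real.cos_two_mul' (θ / 2)
    have hh2 := Real.sin_sq_add_cos_sq (θ / 2)
    rw [show 2 * (θ / 2) = θ by ring] at hh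
    linarith
  have hss : (θ / 4) ^ 2 ≤ Real.sin (θ / 2) ^ 2 := by nlinarith
  have hcoshnn : (0:ℝ) ≤ Real.cosh r := le_trans (by positivity) hup
  have hmul : Real.exp r / 2 * (2 * (θ / 4) ^ 2) ≤ Real.cosh r * (2 * Real.sin (θ / 2) ^ 2) :=
    mul_le_mul hup (by linarith) (by positivity) hcoshnn
  calc Real.exp r * θ ^ 2 / 16 = Real.exp r / 2 * (2 * (θ / 4) ^ 2) := by ring
    _ ≤ Real.cosh r * (2 * Real.sin (θ / 2) ^ 2) := hmul
    _ = Real.cosh r - Real.cosh r * Real.cos θ := by rw [hc2]; ring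
    _ ≤ Real.cosh r - Real.sinh r * Real.cos θ := by linarith

/-- For every integer `d ≥ 2` there is a constant `C` (depending only
on `d`) such that for all `r ≥ 0`,
`∫₀^π (cosh r − sinh r cos θ)^{-(d-1)/2} (sin θ)^{d-2} dθ ≤ C e^{-(d-1)r/2} (1+r)`. -/
theorem spherical_function_bound (d : ℕ) (hd : 2 ≤ d) :
    ∃ C : ℝ, ∀ r : ℝ, 0 ≤ r →
      (∫ θ in (0 : ℝ)..Real.pi,
          (Real.cosh r - Real.sinh r * Real.cos θ) ^ (-(((d : ℝ) - 1) / 2)) *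
            Real.sin θ ^ (d - 2)) ≤
        C * Real.exp (-((d : ℝ) - 1) * r / 2) * (1 + r) := by
  set ρ : ℝ := ((d : ℝ) - 1) / 2 with hρdef
  have hd1 : (2:ℝ) ≤ (d:ℝ) := by exact_mod_cast hd
  have hρpos : 0 < ρ := by rw [hρdef]; linarith
  have hdcast : ((d - 1 : ℕ) : ℝ) = (d:ℝ) - 1 := by
    push_cast [Nat.cast_sub (show 1 ≤ d by omega)]; ring
  refine ⟨1 + 16 ^ ρ + 2 ^ ρ * Real.pi / 2, fun r hr => ?_⟩
  set a : ℝ := Real.exp (-r) with hadef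
  have ha : 0 < a := Real.exp_pos _
  have ha1 : a ≤ 1 := Real.exp_le_one_iff.mpr (by linarith)
  have hpi2 : (2:ℝ) ≤ Real.pi := Real.two_le_pi
  have hpi4 : Real.pi ≤ 4 := Real.pi_le_four
  set f : ℝ → ℝ := fun θ =>
    (Real.cosh r - Real.sinh r * Real.cos θ) ^ (-ρ) * Real.sin θ ^ (d - 2) with hfdef
  have hfc : Continuous f := by
    apply Continuous.mul
    · exact Continuous.rpow_const (by continuity) fun x => Or.inl (ne_of_gt (u_pos r x hr))
    · exact Real.continuous_sin.pow _
  have hint : ∀ x y : ℝ, IntervalIntegrable f MeasureTheory.volume x y := fun x y =>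
    hfc.intervalIntegrable x y
  have hsplit1 : (∫ θ in (0:ℝ)..Real.pi, f θ)
      = (∫ θ in (0:ℝ)..a, f θ) + ∫ θ in a..Real.pi, f θ :=
    (integral_add_adjacent_intervals (hint 0 a) (hint a Real.pi)).symm
  have hsplit2 : (∫ θ in a..Real.pi, f θ)
      = (∫ θ in a..(Real.pi/2), f θ) + ∫ θ in (Real.pi/2)..Real.pi, f θ :=
    (integral_add_adjacent_intervals (hint a (Real.pi/2)) (hint (Real.pi/2) Real.pi)).symm
  set E : ℝ := Real.exp (-(ρ * r)) with hEdef
  have hE : 0 < E := Real.exp_pos _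
  -- Piece 1
  have hI1 : (∫ θ in (0:ℝ)..a, f θ) ≤ E := by
    have hconst : Real.exp (ρ * r) * a ^ (d - 2) * a = E := by
      rw [hadef, hEdef, ← Real.exp_nat_mul, ← Real.exp_add, ← Real.exp_add]
      congr 1
      have : ((d - 2 : ℕ) : ℝ) = (d:ℝ) - 2 := by
        push_cast [Nat.cast_sub (show 2 ≤ d by omega)]; ring
      rw [this, hρdef]; ring
    have hmono : (∫ θ in (0:ℝ)..a, f θ)
        ≤ ∫ _ in (0:ℝ)..a, Real.exp (ρ * r) * a ^ (d - 2) := by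
      apply integral_mono_on ha.le (hint 0 a)
        (intervalIntegrable_const)
      intro θ hθ
      obtain ⟨hθ0, hθa⟩ := hθ
      have h1 : (Real.cosh r - Real.sinh r * Real.cos θ) ^ (-ρ) ≤ Real.exp (ρ * r) := by
        have h := Real.rpow_le_rpow_of_nonpos (Real.exp_pos (-r)) (ulb1 r θ hr)
          (neg_nonpos.mpr hρpos.le)
        calc (Real.cosh r - Real.sinh r * Real.cos θ) ^ (-ρ)
            ≤ Real.exp (-r) ^ (-ρ) := h
          _ = Real.exp (ρ * r) := by rw [← Real.exp_mul]; ring_nf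
      have h2 : Real.sin θ ^ (d - 2) ≤ a ^ (d - 2) := by
        apply pow_le_pow_left₀ (Real.sin_nonneg_of_nonneg_of_le_pi hθ0 (by linarith))
        calc Real.sin θ ≤ θ := Real.sin_le hθ0
          _ ≤ a := hθa
      exact mul_le_mul h1 h2
        (pow_nonneg (Real.sin_nonneg_of_nonneg_of_le_pi hθ0 (by linarith)) _)
        (Real.exp_pos _).le
    rw [integral_const] at hmono
    calc (∫ θ in (0:ℝ)..a, f θ) ≤ (a - 0) • (Real.exp (ρ * r) * a ^ (d - 2)) := hmono
      _ = E := by rw [smul_eq_mul, ← hconst]; ring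
  -- Piece 2
  have hI2 : (∫ θ in a..(Real.pi/2), f θ) ≤ 16 ^ ρ * E * (1 + r) := by
    have hapi : a ≤ Real.pi / 2 := by linarith
    have hmono : (∫ θ in a..(Real.pi/2), f θ)
        ≤ ∫ θ in a..(Real.pi/2), 16 ^ ρ * E * θ⁻¹ := by
      apply integral_mono_on hapi (hint a (Real.pi/2))
      · apply IntervalIntegrable.const_mul
        apply intervalIntegrable_inv
        · intro x hx
          rw [Set.uIcc_of_le hapi] at hx
          exact ne_of_gt (lt_of_lt_of_le ha hx.1)
        · exact continuousOn_id
      intro θ hθ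
      obtain ⟨hθa, hθpi⟩ := hθ
      have hθ0 : 0 < θ := lt_of_lt_of_le ha hθa
      have h1 : (Real.cosh r - Real.sinh r * Real.cos θ) ^ (-ρ)
          ≤ (Real.exp r * θ ^ 2 / 16) ^ (-ρ) :=
        Real.rpow_le_rpow_of_nonpos (by positivity) (ulb2 r θ hr hθ0.le hθpi)
          (neg_nonpos.mpr hρpos.le)
      have h2 : Real.sin θ ^ (d - 2) ≤ θ ^ (d - 2) :=
        pow_le_pow_left₀ (Real.sin_nonneg_of_nonneg_of_le_pi hθ0.le (by linarith))
          (Real.sin_le hθ0.le) _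
      have heq : (Real.exp r * θ ^ 2 / 16) ^ (-ρ) * θ ^ (d - 2) = 16 ^ ρ * E * θ⁻¹ := by
        rw [show Real.exp r * θ ^ 2 / 16 = Real.exp r * θ ^ 2 * 16⁻¹ by ring,
          Real.mul_rpow (by positivity) (by positivity),
          Real.mul_rpow (by positivity) (by positivity),
          Real.inv_rpow (by norm_num), ← Real.rpow_neg (by norm_num : (0:ℝ) ≤ 16), neg_neg,
          ← Real.exp_mul,
          ← Real.rpow_natCast θ 2, ← Real.rpow_mul hθ0.le,
          ← Real.rpow_natCast θ (d - 2)]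
        have hθmul : θ ^ (((2:ℕ):ℝ) * -ρ) * θ ^ (((d - 2 : ℕ)):ℝ) = θ⁻¹ := by
          rw [← Real.rpow_add hθ0,
            show ((2:ℕ):ℝ) * -ρ + ((d - 2 : ℕ):ℝ) = -1 by
              push_cast [Nat.cast_sub hd]; rw [hρdef]; ring]
          exact Real.rpow_neg_one θ
        calc Real.exp (r * -ρ) * θ ^ (((2:ℕ):ℝ) * -ρ) * 16 ^ ρ * θ ^ (((d - 2:ℕ)):ℝ)
            = 16 ^ ρ * Real.exp (r * -ρ)
                * (θ ^ (((2:ℕ):ℝ) * -ρ) * θ ^ (((d - 2:ℕ)):ℝ)) := by ring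
          _ = 16 ^ ρ * E * θ⁻¹ := by
              rw [hθmul, hEdef, show r * -ρ = -(ρ * r) by ring]
      calc f θ ≤ (Real.exp r * θ ^ 2 / 16) ^ (-ρ) * θ ^ (d - 2) :=
            mul_le_mul h1 h2
              (pow_nonneg (Real.sin_nonneg_of_nonneg_of_le_pi hθ0.le (by linarith)) _)
              (Real.rpow_nonneg (by positivity) _)
        _ = 16 ^ ρ * E * θ⁻¹ := heq
    rw [integral_const_mul, integral_inv_of_pos ha (by positivity)] at hmono
    have hlog : Real.log (Real.pi / 2 / a) ≤ 1 + r := by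
      rw [Real.log_div (by positivity) (ne_of_gt ha), hadef, Real.log_exp]
      have := Real.log_le_sub_one_of_pos (show (0:ℝ) < Real.pi / 2 by positivity)
      linarith
    calc (∫ θ in a..(Real.pi/2), f θ) ≤ 16 ^ ρ * E * Real.log (Real.pi / 2 / a) := hmono
      _ ≤ 16 ^ ρ * E * (1 + r) := by
          apply mul_le_mul_of_nonneg_left hlog (by positivity)
  -- Piece 3
  have hI3 : (∫ θ in (Real.pi/2)..Real.pi, f θ) ≤ 2 ^ ρ * E * (Real.pi / 2) := by
    have hconsteq : (Real.exp r / 2) ^ (-ρ) = 2 ^ ρ * E := by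
      rw [show Real.exp r / 2 = Real.exp r * 2⁻¹ by ring,
        Real.mul_rpow (by positivity) (by positivity),
        Real.inv_rpow (by norm_num), ← Real.rpow_neg (by norm_num : (0:ℝ) ≤ 2), neg_neg,
        ← Real.exp_mul, hEdef, show r * -ρ = -(ρ * r) by ring]
      ring
    have hmono : (∫ θ in (Real.pi/2)..Real.pi, f θ)
        ≤ ∫ _ in (Real.pi/2)..Real.pi, 2 ^ ρ * E := by
      apply integral_mono_on (by linarith) (hint _ _) intervalIntegrable_const
      intro θ hθ
      obtain ⟨hθ1, hθ2⟩ := hθ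
      have hcosle : Real.cos θ ≤ 0 :=
        Real.cos_nonpos_of_pi_div_two_le_of_le hθ1 (by linarith)
      have hsinh : 0 ≤ Real.sinh r := Real.sinh_nonneg_iff.mpr hr
      have hcosh : Real.exp r / 2 ≤ Real.cosh r := by
        rw [Real.cosh_eq]; nlinarith [Real.exp_pos (-r)]
      have hu : Real.exp r / 2 ≤ Real.cosh r - Real.sinh r * Real.cos θ := by
        nlinarith [mul_nonneg hsinh (neg_nonneg.mpr hcosle)]
      have h1 : (Real.cosh r - Real.sinh r * Real.cos θ) ^ (-ρ) ≤ 2 ^ ρ * E := by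
        rw [← hconsteq]
        exact Real.rpow_le_rpow_of_nonpos (by positivity) hu (neg_nonpos.mpr hρpos.le)
      have h2 : Real.sin θ ^ (d - 2) ≤ 1 :=
        pow_le_one₀ (Real.sin_nonneg_of_nonneg_of_le_pi (by linarith) hθ2) (Real.sin_le_one θ)
      calc f θ ≤ (Real.cosh r - Real.sinh r * Real.cos θ) ^ (-ρ) * 1 :=
            mul_le_mul_of_nonneg_left h2 (Real.rpow_nonneg (u_pos r θ hr).le _)
        _ = (Real.cosh r - Real.sinh r * Real.cos θ) ^ (-ρ) := mul_one _
        _ ≤ 2 ^ ρ * E := h1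
    rw [integral_const, smul_eq_mul] at hmono
    calc (∫ θ in (Real.pi/2)..Real.pi, f θ)
        ≤ (Real.pi - Real.pi/2) * (2 ^ ρ * E) := hmono
      _ = 2 ^ ρ * E * (Real.pi / 2) := by ring
  -- Assemble
  have hexp : Real.exp (-((d:ℝ) - 1) * r / 2) = E := by
    rw [hEdef]; congr 1; rw [hρdef]; ring
  rw [hexp, hsplit1, hsplit2]
  have h16 : (0:ℝ) ≤ 16 ^ ρ := Real.rpow_nonneg (by norm_num) _
  have h2p : (0:ℝ) ≤ 2 ^ ρ := Real.rpow_nonneg (by norm_num) _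
  have key : E + 16 ^ ρ * E * (1 + r) + 2 ^ ρ * E * (Real.pi / 2)
      ≤ (1 + 16 ^ ρ + 2 ^ ρ * Real.pi / 2) * E * (1 + r) := by
    nlinarith [mul_nonneg (mul_nonneg h2p (by positivity : (0:ℝ) ≤ Real.pi / 2))
      (mul_nonneg hE.le hr), mul_nonneg hE.le hr]
  linarith [hI1, hI2, hI3]
end
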